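/- arXiv:1610.08457 — 6 statements merged into one kernel-verified Lean document; each statement's English description precedes it below -/
import Mathlib

section
/- Let f : X → Y be an irreducible morphism in C_I(P) between minimal projective complexes. Then exactly one of the following three conditions holds: (a) f is smonic; (b) f is sepic; (c) f is sirreducible. -/
/-!
Statement 0 (Proposition 3 of [Giraldo–Merklen], cf. Proposition 1 in the paper):
an irreducible morphism of minimal projective complexes is exactly one of
smonic, sepic, sirreducible.
-/

open CategoryTheory CategoryTheory.Limits

namespace ARShapes

variable {Λ : Type} [Ring Λ]

/-- Cochain complexes of (right) `Λ`-modules, i.e. `Λᵐᵒᵖ`-modules, indexed by `ℤ`. -/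
abbrev Cplx (Λ : Type) [Ring Λ] : Type 1 := CochainComplex (ModuleCat Λᵐᵒᵖ) ℤ

/-- A minimal projective complex: a complex of finitely generated projective right
`Λ`-modules whose differentials have image contained in the radical of the target. -/
def IsMinimalProjective (X : Cplx Λ) : Prop :=
  (∀ i : ℤ, Module.Finite Λᵐᵒᵖ (X.X i)) ∧ (∀ i : ℤ, Module.Projective Λᵐᵒᵖ (X.X i)) ∧
    (∀ i : ℤ, LinearMap.range (X.d i (i + 1)).hom ≤
      (Ideal.jacobson (⊥ : Ideal Λᵐᵒᵖ)) • (⊤ : Submodule Λᵐᵒᵖ (X.X (i + 1))))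

/-- Irreducibility of a morphism in the category `P` of finitely generated projective
right `Λ`-modules (a full subcategory of all modules). -/
def IrreducibleP {M N : ModuleCat Λᵐᵒᵖ} (φ : M ⟶ N) : Prop :=
  ¬ IsSplitMono φ ∧ ¬ IsSplitEpi φ ∧
    ∀ (Z : ModuleCat Λᵐᵒᵖ), Module.Finite Λᵐᵒᵖ Z → Module.Projective Λᵐᵒᵖ Z →
      ∀ (g : M ⟶ Z) (h : Z ⟶ N), φ = g ≫ h → IsSplitMono g ∨ IsSplitEpi h

/-- A chain map is smonic if all of its components are split monomorphisms. -/
def Smonic {X Y : Cplx Λ} (f : X ⟶ Y) : Prop := ∀ i : ℤ, IsSplitMono (f.f i)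

/-- A chain map is sepic if all of its components are split epimorphisms. -/
def Sepic {X Y : Cplx Λ} (f : X ⟶ Y) : Prop := ∀ i : ℤ, IsSplitEpi (f.f i)

/-- A chain map is sirreducible if there is exactly one index `i₀` where the component is
irreducible in the category of finitely generated projective modules, the components in lower
degrees being split epimorphisms and those in higher degrees split monomorphisms.  (Since an
irreducible morphism is neither a split monomorphism nor a split epimorphism, the uniqueness
of such an index is automatic.) -/
def Sirreducible {X Y : Cplx Λ} (f : X ⟶ Y) : Prop :=
  ∃ i₀ : ℤ, IrreducibleP (f.f i₀) ∧ (∀ i : ℤ, i < i₀ → IsSplitEpi (f.f i)) ∧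
    (∀ i : ℤ, i₀ < i → IsSplitMono (f.f i))

/-- Irreducibility of a chain map in the category `C_I(P)` of minimal projective
complexes (a full subcategory of all complexes). -/
def IrreducibleC {X Y : Cplx Λ} (f : X ⟶ Y) : Prop :=
  ¬ IsSplitMono f ∧ ¬ IsSplitEpi f ∧
    ∀ (Z : Cplx Λ), IsMinimalProjective Z →
      ∀ (g : X ⟶ Z) (h : Z ⟶ Y), f = g ≫ h → IsSplitMono g ∨ IsSplitEpi h


lemma isSplitMono_of_comp_eqToHom {C : Type*} [Category C] {A B B' : C} (φ : A ⟶ B) (e : B = B')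
    (h : IsSplitMono (φ ≫ eqToHom e)) : IsSplitMono φ := by subst e; simpa using h

lemma isSplitEpi_of_eqToHom_comp {C : Type*} [Category C] {A A' B : C} (e : A = A') (φ : A' ⟶ B)
    (h : IsSplitEpi (eqToHom e ≫ φ)) : IsSplitEpi φ := by subst e; simpa using h

lemma isSplitMono_component {X Y : Cplx Λ} {f : X ⟶ Y} (h : IsSplitMono f) (j : ℤ) :
    IsSplitMono (f.f j) := by
  obtain ⟨sm⟩ := h.exists_splitMono
  exact ⟨⟨⟨sm.retraction.f j, by rw [← HomologicalComplex.comp_f, sm.id]; rfl⟩⟩⟩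

lemma isSplitEpi_component {X Y : Cplx Λ} {f : X ⟶ Y} (h : IsSplitEpi f) (j : ℤ) :
    IsSplitEpi (f.f j) := by
  obtain ⟨se⟩ := h.exists_splitEpi
  exact ⟨⟨⟨se.section_.f j, by rw [← HomologicalComplex.comp_f, se.id]; rfl⟩⟩⟩


lemma range_comp_le {M N P : ModuleCat Λᵐᵒᵖ} (a : M ⟶ N) (b : N ⟶ P) :
    LinearMap.range (a ≫ b).hom ≤ LinearMap.range b.hom := by
  rw [ModuleCat.hom_comp]; exact LinearMap.range_comp_le_range a.hom b.hom

lemma rad_map {M N P : ModuleCat Λᵐᵒᵖ} (d : M ⟶ N)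
    (hd : LinearMap.range d.hom ≤ Ideal.jacobson (⊥ : Ideal Λᵐᵒᵖ) • (⊤ : Submodule Λᵐᵒᵖ N))
    (a : N ⟶ P) :
    LinearMap.range (d ≫ a).hom ≤ Ideal.jacobson (⊥ : Ideal Λᵐᵒᵖ) • (⊤ : Submodule Λᵐᵒᵖ P) := by
  rw [ModuleCat.hom_comp, LinearMap.range_comp]
  calc Submodule.map a.hom (LinearMap.range d.hom)
      ≤ Submodule.map a.hom (Ideal.jacobson (⊥ : Ideal Λᵐᵒᵖ) • ⊤) := Submodule.map_mono hd
    _ = Ideal.jacobson (⊥ : Ideal Λᵐᵒᵖ) • Submodule.map a.hom ⊤ := Submodule.map_smul'' _ _ _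
    _ ≤ _ := smul_mono_right _ le_top

lemma finite_congr {M N : ModuleCat Λᵐᵒᵖ} (e : M = N) (h : Module.Finite Λᵐᵒᵖ M) :
    Module.Finite Λᵐᵒᵖ N := by subst e; exact h

lemma projective_congr {M N : ModuleCat Λᵐᵒᵖ} (e : M = N) (h : Module.Projective Λᵐᵒᵖ M) :
    Module.Projective Λᵐᵒᵖ N := by subst e; exact h

lemma isSplitMono_of_components {X Y : Cplx Λ} (f : X ⟶ Y)
    (hm : ∀ j : ℤ, IsSplitMono (f.f j)) (he : ∀ j : ℤ, IsSplitEpi (f.f j)) :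
    IsSplitMono f := by
  haveI : ∀ n : ℤ, IsIso (f.f n) := by
    intro n
    obtain ⟨sm⟩ := (hm n).exists_splitMono
    obtain ⟨se⟩ := (he n).exists_splitEpi
    refine ⟨sm.retraction, sm.id, ?_⟩
    have heq : sm.retraction = se.section_ := by
      calc sm.retraction = (se.section_ ≫ f.f n) ≫ sm.retraction := by rw [se.id, Category.id_comp]
        _ = se.section_ ≫ (f.f n ≫ sm.retraction) := by rw [Category.assoc]
        _ = se.section_ := by rw [sm.id, Category.comp_id]
    rw [heq, se.id]
  haveI := HomologicalComplex.Hom.isIso_of_components f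
  infer_instance

section Glue
variable (A B : Cplx Λ) (i : ℤ)

def glueX (j : ℤ) : ModuleCat Λᵐᵒᵖ := if j ≤ i then A.X j else B.X j

lemma glueX_eq_A {j : ℤ} (h : j ≤ i) : glueX A B i j = A.X j := if_pos h
lemma glueX_eq_B {j : ℤ} (h : ¬ j ≤ i) : glueX A B i j = B.X j := if_neg h
lemma glueX_eq_A' {j : ℤ} (h : j ≤ i) (h' : j = i) : glueX A B i j = A.X i := by
  rw [glueX_eq_A A B i h, h']
lemma glueX_eq_B' {j : ℤ} (h : ¬ j ≤ i) (h' : j = i + 1) : glueX A B i j = B.X (i+1) := by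
  rw [glueX_eq_B A B i h, h']

variable (φ : A.X i ⟶ B.X (i+1))

def glueD (j : ℤ) : glueX A B i j ⟶ glueX A B i (j+1) :=
  if h : j + 1 ≤ i then
    eqToHom (glueX_eq_A A B i (by omega)) ≫ A.d j (j+1) ≫ eqToHom (glueX_eq_A A B i h).symm
  else if h' : j ≤ i then
    eqToHom (glueX_eq_A' A B i h' (by omega)) ≫ φ ≫
      eqToHom (glueX_eq_B' A B i (by omega) (by omega)).symm
  else
    eqToHom (glueX_eq_B A B i h') ≫ B.d j (j+1) ≫ eqToHom (glueX_eq_B A B i (by omega)).symm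

lemma glue_sq (h1 : ∀ k : ℤ, A.d k i ≫ φ = 0) (h2 : ∀ l : ℤ, φ ≫ B.d (i+1) l = 0)
    (j : ℤ) : glueD A B i φ j ≫ glueD A B i φ (j+1) = 0 := by
  unfold glueD
  by_cases c1 : j + 1 ≤ i
  · rw [dif_pos c1]
    by_cases c2 : j + 1 + 1 ≤ i
    · rw [dif_pos c2]; simp
    · rw [dif_neg c2, dif_pos c1]
      have hji : i = j + 1 := by omega
      subst hji
      have hh := h1 j
      simp [reassoc_of% hh]
  · rw [dif_neg c1]
    by_cases c2 : j ≤ i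
    · obtain rfl : j = i := by omega
      rw [dif_pos c2, dif_neg (by omega : ¬ j + 1 + 1 ≤ j), dif_neg c1]
      have hh := h2 (j + 1 + 1)
      simp [reassoc_of% hh]
    · rw [dif_neg c2, dif_neg (by omega : ¬ j + 1 + 1 ≤ i), dif_neg (by omega : ¬ j + 1 ≤ i)]
      simp

def glueCplx (h1 : ∀ k : ℤ, A.d k i ≫ φ = 0) (h2 : ∀ l : ℤ, φ ≫ B.d (i+1) l = 0) : Cplx Λ :=
  CochainComplex.of (glueX A B i) (glueD A B i φ) (glue_sq A B i φ h1 h2)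

@[simp]
lemma glueCplx_X (h1 : ∀ k : ℤ, A.d k i ≫ φ = 0) (h2 : ∀ l : ℤ, φ ≫ B.d (i+1) l = 0) (j : ℤ) :
    (glueCplx A B i φ h1 h2).X j = glueX A B i j := rfl

lemma glueCplx_minimal (h1 : ∀ k : ℤ, A.d k i ≫ φ = 0) (h2 : ∀ l : ℤ, φ ≫ B.d (i+1) l = 0)
    (hA : ∀ j : ℤ, LinearMap.range (A.d j (j + 1)).hom ≤
      Ideal.jacobson (⊥ : Ideal Λᵐᵒᵖ) • (⊤ : Submodule Λᵐᵒᵖ (A.X (j+1))))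
    (hB : ∀ j : ℤ, LinearMap.range (B.d j (j + 1)).hom ≤
      Ideal.jacobson (⊥ : Ideal Λᵐᵒᵖ) • (⊤ : Submodule Λᵐᵒᵖ (B.X (j+1))))
    (hAf : ∀ j : ℤ, Module.Finite Λᵐᵒᵖ (A.X j)) (hBf : ∀ j : ℤ, Module.Finite Λᵐᵒᵖ (B.X j))
    (hAp : ∀ j : ℤ, Module.Projective Λᵐᵒᵖ (A.X j)) (hBp : ∀ j : ℤ, Module.Projective Λᵐᵒᵖ (B.X j))
    (hφ : LinearMap.range φ.hom ≤ Ideal.jacobson (⊥ : Ideal Λᵐᵒᵖ) • (⊤ : Submodule Λᵐᵒᵖ (B.X (i+1)))) :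
    (∀ j : ℤ, Module.Finite Λᵐᵒᵖ ((glueCplx A B i φ h1 h2).X j)) ∧
    (∀ j : ℤ, Module.Projective Λᵐᵒᵖ ((glueCplx A B i φ h1 h2).X j)) ∧
    (∀ j : ℤ, LinearMap.range ((glueCplx A B i φ h1 h2).d j (j + 1)).hom ≤
      Ideal.jacobson (⊥ : Ideal Λᵐᵒᵖ) • (⊤ : Submodule Λᵐᵒᵖ ((glueCplx A B i φ h1 h2).X (j+1)))) := by
  refine ⟨?_, ?_, ?_⟩
  · intro j
    show Module.Finite Λᵐᵒᵖ (glueX A B i j)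
    by_cases h : j ≤ i
    · exact finite_congr (glueX_eq_A A B i h).symm (hAf j)
    · exact finite_congr (glueX_eq_B A B i h).symm (hBf j)
  · intro j
    show Module.Projective Λᵐᵒᵖ (glueX A B i j)
    by_cases h : j ≤ i
    · exact projective_congr (glueX_eq_A A B i h).symm (hAp j)
    · exact projective_congr (glueX_eq_B A B i h).symm (hBp j)
  · intro j
    have hd : (glueCplx A B i φ h1 h2).d j (j + 1) = glueD A B i φ j :=
      CochainComplex.of_d _ _ j
    rw [hd]
    unfold glueD
    by_cases c1 : j + 1 ≤ i
    · rw [dif_pos c1]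
      exact le_trans (range_comp_le _ _) (rad_map _ (hA j) _)
    · rw [dif_neg c1]
      by_cases c2 : j ≤ i
      · rw [dif_pos c2]
        exact le_trans (range_comp_le _ _) (rad_map _ hφ _)
      · rw [dif_neg c2]
        exact le_trans (range_comp_le _ _) (rad_map _ (hB j) _)
end Glue

section Trunc
variable {X Y : Cplx Λ} (f : X ⟶ Y) (i : ℤ)

def truncφ : X.X i ⟶ Y.X (i+1) := X.d i (i+1) ≫ f.f (i+1)

lemma truncφ_h1 : ∀ k : ℤ, X.d k i ≫ truncφ f i = 0 := fun k => by
  simp [truncφ]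

lemma truncφ_h2 : ∀ l : ℤ, truncφ f i ≫ Y.d (i+1) l = 0 := fun l => by
  simp [truncφ]

abbrev truncZ : Cplx Λ := glueCplx X Y i (truncφ f i) (truncφ_h1 f i) (truncφ_h2 f i)

lemma truncZ_minimal (hX : IsMinimalProjective X) (hY : IsMinimalProjective Y) :
    IsMinimalProjective (truncZ f i) := by
  have := glueCplx_minimal X Y i (truncφ f i) (truncφ_h1 f i) (truncφ_h2 f i)
    hX.2.2 hY.2.2 hX.1 hY.1 hX.2.1 hY.2.1 (rad_map _ (hX.2.2 i) _)
  exact ⟨this.1, this.2.1, this.2.2⟩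

def truncG : X ⟶ truncZ f i where
  f j := if h : j ≤ i then eqToHom (glueX_eq_A X Y i h).symm
         else f.f j ≫ eqToHom (glueX_eq_B X Y i h).symm
  comm' j k hk := by
    obtain rfl : j + 1 = k := hk
    have hd : (truncZ f i).d j (j+1) = glueD X Y i (truncφ f i) j := CochainComplex.of_d _ _ j
    rw [hd]
    unfold glueD truncφ
    by_cases c1 : j + 1 ≤ i
    · simp only [dif_pos c1, dif_pos (show j ≤ i by omega)]
      simp
    · by_cases c2 : j ≤ i
      · obtain rfl : j = i := by omega
        simp only [dif_pos c2, dif_neg c1]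
        simp
      · simp only [dif_neg c2, dif_neg c1, dif_neg (show ¬ j + 1 ≤ i by omega)]
        simp

def truncH : truncZ f i ⟶ Y where
  f j := if h : j ≤ i then eqToHom (glueX_eq_A X Y i h) ≫ f.f j else eqToHom (glueX_eq_B X Y i h)
  comm' j k hk := by
    obtain rfl : j + 1 = k := hk
    have hd : (truncZ f i).d j (j+1) = glueD X Y i (truncφ f i) j := CochainComplex.of_d _ _ j
    rw [hd]
    unfold glueD truncφ
    by_cases c1 : j + 1 ≤ i
    · simp only [dif_pos c1, dif_pos (show j ≤ i by omega)]
      simp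
    · by_cases c2 : j ≤ i
      · obtain rfl : j = i := by omega
        simp only [dif_pos c2, dif_neg c1]
        simp
      · simp only [dif_neg c2, dif_neg c1, dif_neg (show ¬ j + 1 ≤ i by omega)]
        simp

lemma trunc_fac : f = truncG f i ≫ truncH f i := by
  apply HomologicalComplex.hom_ext
  intro j
  show f.f j = (truncG f i).f j ≫ (truncH f i).f j
  by_cases h : j ≤ i
  · simp [truncG, truncH, dif_pos h]
  · simp [truncG, truncH, dif_neg h]

lemma stepB (hX : IsMinimalProjective X) (hY : IsMinimalProjective Y)
    (hf : IrreducibleC f) :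
    (∀ j : ℤ, j ≤ i → IsSplitEpi (f.f j)) ∨ (∀ j : ℤ, i < j → IsSplitMono (f.f j)) := by
  rcases hf.2.2 (truncZ f i) (truncZ_minimal f i hX hY) (truncG f i) (truncH f i)
    (trunc_fac f i) with hg | hh
  · right
    intro j hj
    have hc := isSplitMono_component hg j
    have e : (truncG f i).f j = f.f j ≫ eqToHom (glueX_eq_B X Y i (by omega)).symm :=
      dif_neg (by omega)
    rw [e] at hc
    exact isSplitMono_of_comp_eqToHom _ _ hc
  · left
    intro j hj
    have hc := isSplitEpi_component hh j
    have e : (truncH f i).f j = eqToHom (glueX_eq_A X Y i hj) ≫ f.f j := dif_pos hj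
    rw [e] at hc
    exact isSplitEpi_of_eqToHom_comp _ _ hc
end Trunc

section Bad
variable {X Y : Cplx Λ} (f : X ⟶ Y) (i : ℤ) (t : Y.X i ⟶ X.X i)

def badφ : Y.X i ⟶ X.X (i+1) := t ≫ X.d i (i+1)

lemma badφ_h1 (ht : t ≫ f.f i = 𝟙 (Y.X i)) [Mono (f.f (i+1))] :
    ∀ k : ℤ, Y.d k i ≫ badφ i t = 0 := fun k => by
  unfold badφ
  rw [← cancel_mono (f.f (i+1))]
  simp only [Category.assoc, zero_comp]
  rw [← HomologicalComplex.Hom.comm f i (i+1)]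
  rw [reassoc_of% ht]
  simp

lemma badφ_h2 : ∀ l : ℤ, badφ i t ≫ X.d (i+1) l = 0 := fun l => by
  simp [badφ]

lemma bad_key (ht : t ≫ f.f i = 𝟙 (Y.X i)) [Mono (f.f (i+1))] :
    f.f i ≫ t ≫ X.d i (i+1) = X.d i (i+1) := by
  rw [← cancel_mono (f.f (i+1))]
  simp only [Category.assoc]
  rw [← HomologicalComplex.Hom.comm f i (i+1)]
  rw [reassoc_of% ht]

variable (ht : t ≫ f.f i = 𝟙 (Y.X i)) [Mono (f.f (i+1))]

abbrev badZ : Cplx Λ :=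
  glueCplx Y X i (badφ i t) (badφ_h1 f i t ht) (badφ_h2 i t)

lemma badZ_minimal (hX : IsMinimalProjective X) (hY : IsMinimalProjective Y) :
    IsMinimalProjective (badZ f i t ht) := by
  have := glueCplx_minimal Y X i (badφ i t) (badφ_h1 f i t ht) (badφ_h2 i t)
    hY.2.2 hX.2.2 hY.1 hX.1 hY.2.1 hX.2.1 (le_trans (range_comp_le _ _) (hX.2.2 i))
  exact ⟨this.1, this.2.1, this.2.2⟩

def badG : X ⟶ badZ f i t ht where
  f j := if h : j ≤ i then f.f j ≫ eqToHom (glueX_eq_A Y X i h).symm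
         else eqToHom (glueX_eq_B Y X i h).symm
  comm' j k hk := by
    obtain rfl : j + 1 = k := hk
    have hd : (badZ f i t ht).d j (j+1) = glueD Y X i (badφ i t) j := CochainComplex.of_d _ _ j
    rw [hd]
    unfold glueD badφ
    by_cases c1 : j + 1 ≤ i
    · simp only [dif_pos c1, dif_pos (show j ≤ i by omega)]
      simp
    · by_cases c2 : j ≤ i
      · obtain rfl : j = i := by omega
        simp only [dif_pos c2, dif_neg c1]
        simp [reassoc_of% (bad_key f j t ht)]
      · simp only [dif_neg c2, dif_neg c1, dif_neg (show ¬ j + 1 ≤ i by omega)]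
        simp

def badH : badZ f i t ht ⟶ Y where
  f j := if h : j ≤ i then eqToHom (glueX_eq_A Y X i h)
         else eqToHom (glueX_eq_B Y X i h) ≫ f.f j
  comm' j k hk := by
    obtain rfl : j + 1 = k := hk
    have hd : (badZ f i t ht).d j (j+1) = glueD Y X i (badφ i t) j := CochainComplex.of_d _ _ j
    rw [hd]
    unfold glueD badφ
    by_cases c1 : j + 1 ≤ i
    · simp only [dif_pos c1, dif_pos (show j ≤ i by omega)]
      simp
    · by_cases c2 : j ≤ i
      · obtain rfl : j = i := by omega
        simp only [dif_pos c2, dif_neg c1]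
        simp only [Category.assoc, eqToHom_trans_assoc, eqToHom_refl, Category.id_comp,
          Category.comp_id, glueCplx_X]
        rw [← HomologicalComplex.Hom.comm f j (j+1)]
        rw [reassoc_of% ht]
      · simp only [dif_neg c2, dif_neg c1, dif_neg (show ¬ j + 1 ≤ i by omega)]
        simp

lemma bad_fac : f = badG f i t ht ≫ badH f i t ht := by
  apply HomologicalComplex.hom_ext
  intro j
  show f.f j = (badG f i t ht).f j ≫ (badH f i t ht).f j
  by_cases h : j ≤ i
  · simp [badG, badH, dif_pos h]
  · simp [badG, badH, dif_neg h]

lemma stepBad (hX : IsMinimalProjective X) (hY : IsMinimalProjective Y)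
    (hf : IrreducibleC f) (t : Y.X i ⟶ X.X i) (ht : t ≫ f.f i = 𝟙 (Y.X i))
    [Mono (f.f (i+1))] (him : ¬ IsSplitMono (f.f i))
    (j : ℤ) (hij : i < j) (hje : ¬ IsSplitEpi (f.f j)) : False := by
  rcases hf.2.2 (badZ f i t ht) (badZ_minimal f i t ht hX hY) (badG f i t ht) (badH f i t ht)
    (bad_fac f i t ht) with hg | hh
  · have hc := isSplitMono_component hg i
    have e : (badG f i t ht).f i = f.f i ≫ eqToHom (glueX_eq_A Y X i le_rfl).symm :=
      dif_pos le_rfl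
    rw [e] at hc
    exact him (isSplitMono_of_comp_eqToHom _ _ hc)
  · have hc := isSplitEpi_component hh j
    have e : (badH f i t ht).f j = eqToHom (glueX_eq_B Y X i (by omega)) ≫ f.f j :=
      dif_neg (by omega)
    rw [e] at hc
    exact hje (isSplitEpi_of_eqToHom_comp _ _ hc)
end Bad

section WGlue
variable {X Y : Cplx Λ} (f : X ⟶ Y) (i : ℤ) {W : ModuleCat Λᵐᵒᵖ}
  (α : X.X i ⟶ W) (β : W ⟶ Y.X i)

def wXo (j : ℤ) : ModuleCat Λᵐᵒᵖ :=
  if j < i then X.X j else if j = i then W else Y.X j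

lemma wXo_lt {j : ℤ} (h : j < i) : wXo (X := X) (Y := Y) i (W := W) j = X.X j := by
  unfold wXo; rw [if_pos h]
lemma wXo_eq {j : ℤ} (h : j = i) : wXo (X := X) (Y := Y) i (W := W) j = W := by
  unfold wXo; rw [if_neg (by omega), if_pos h]
lemma wXo_gt {j : ℤ} (h : i < j) : wXo (X := X) (Y := Y) i (W := W) j = Y.X j := by
  unfold wXo; rw [if_neg (by omega), if_neg (by omega)]

def wD (j : ℤ) : wXo (X := X) (Y := Y) i (W := W) j ⟶ wXo (X := X) (Y := Y) i (W := W) (j+1) :=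
  if h : j + 1 < i then
    eqToHom (wXo_lt i (by omega)) ≫ X.d j (j+1) ≫ eqToHom (wXo_lt i h).symm
  else if h2 : j + 1 = i then
    eqToHom (wXo_lt i (by omega)) ≫ X.d j (j+1) ≫ eqToHom (show X.X (j+1) = X.X i by rw [h2]) ≫
      α ≫ eqToHom (wXo_eq i (by omega)).symm
  else if h3 : j = i then
    eqToHom (wXo_eq i h3) ≫ β ≫ Y.d i (i+1) ≫
      eqToHom (show Y.X (i+1) = wXo (X := X) (Y := Y) i (W := W) (j+1) by
        rw [wXo_gt i (show i < j + 1 by omega), h3])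
  else
    eqToHom (wXo_gt i (by omega)) ≫ Y.d j (j+1) ≫ eqToHom (wXo_gt i (by omega)).symm

lemma w_sq (hαβ : f.f i = α ≫ β) (j : ℤ) :
    wD (X := X) (Y := Y) i α β j ≫ wD (X := X) (Y := Y) i α β (j+1) = 0 := by
  unfold wD
  by_cases c1 : j + 1 < i
  · by_cases c2 : j + 1 + 1 < i
    · simp only [dif_pos c1, dif_pos c2]
      simp
    · have c2' : j + 1 + 1 = i := by omega
      subst c2'
      simp only [dif_pos c1, dif_neg (show ¬ (j+1+1 : ℤ) < j+1+1 by omega),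
        dif_pos (show (j+1+1 : ℤ) = j+1+1 from rfl)]
      simp
  · by_cases c2 : j + 1 = i
    · subst c2
      simp only [dif_neg (show ¬ (j+1 : ℤ) < j+1 by omega),
        dif_pos (show (j+1 : ℤ) = j+1 from rfl),
        dif_neg (show ¬ (j+1+1 : ℤ) < j+1 by omega),
        dif_neg (show ¬ (j+1+1 : ℤ) = j+1 by omega)]
      simp [reassoc_of% hαβ.symm]
    · by_cases c3 : j = i
      · subst c3
        simp only [dif_neg (show ¬ (j+1 : ℤ) < j by omega),
          dif_neg (show ¬ (j+1 : ℤ) = j by omega),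
          dif_pos (show (j : ℤ) = j from rfl),
          dif_neg (show ¬ (j+1+1 : ℤ) < j by omega),
          dif_neg (show ¬ (j+1+1 : ℤ) = j by omega)]
        simp
      · simp only [dif_neg c1, dif_neg c2, dif_neg c3,
          dif_neg (show ¬ (j+1+1 : ℤ) < i by omega),
          dif_neg (show ¬ (j+1+1 : ℤ) = i by omega)]
        simp

abbrev wZ (hαβ : f.f i = α ≫ β) : Cplx Λ :=
  CochainComplex.of (wXo (X := X) (Y := Y) i (W := W)) (wD (X := X) (Y := Y) i α β)
    (w_sq f i α β hαβ)

lemma wZ_minimal (hαβ : f.f i = α ≫ β) (hX : IsMinimalProjective X) (hY : IsMinimalProjective Y)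
    (hWf : Module.Finite Λᵐᵒᵖ W) (hWp : Module.Projective Λᵐᵒᵖ W) :
    IsMinimalProjective (wZ f i α β hαβ) := by
  refine ⟨?_, ?_, ?_⟩
  · intro j
    show Module.Finite Λᵐᵒᵖ (wXo (X := X) (Y := Y) i (W := W) j)
    rcases lt_trichotomy j i with h | h | h
    · exact finite_congr (wXo_lt i h).symm (hX.1 j)
    · exact finite_congr (wXo_eq i h).symm hWf
    · exact finite_congr (wXo_gt i h).symm (hY.1 j)
  · intro j
    show Module.Projective Λᵐᵒᵖ (wXo (X := X) (Y := Y) i (W := W) j)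
    rcases lt_trichotomy j i with h | h | h
    · exact projective_congr (wXo_lt i h).symm (hX.2.1 j)
    · exact projective_congr (wXo_eq i h).symm hWp
    · exact projective_congr (wXo_gt i h).symm (hY.2.1 j)
  · intro j
    have hd : (wZ f i α β hαβ).d j (j+1) = wD (X := X) (Y := Y) i α β j :=
      CochainComplex.of_d _ _ j
    rw [hd]
    unfold wD
    by_cases c1 : j + 1 < i
    · rw [dif_pos c1]
      exact le_trans (range_comp_le _ _) (rad_map _ (hX.2.2 j) _)
    · rw [dif_neg c1]
      by_cases c2 : j + 1 = i
      · rw [dif_pos c2]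
        exact le_trans (range_comp_le _ _) (rad_map _ (hX.2.2 j) _)
      · rw [dif_neg c2]
        by_cases c3 : j = i
        · rw [dif_pos c3]
          exact le_trans (range_comp_le _ _) (le_trans (range_comp_le _ _)
            (rad_map _ (hY.2.2 i) _))
        · rw [dif_neg c3]
          exact le_trans (range_comp_le _ _) (rad_map _ (hY.2.2 j) _)

def wG (hαβ : f.f i = α ≫ β) : X ⟶ wZ f i α β hαβ where
  f j :=
    if h : j < i then eqToHom (wXo_lt i h).symm
    else if h2 : j = i then
      eqToHom (show X.X j = X.X i by rw [h2]) ≫ α ≫ eqToHom (wXo_eq i h2).symm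
    else f.f j ≫ eqToHom (wXo_gt i (by omega)).symm
  comm' j k hk := by
    obtain rfl : j + 1 = k := hk
    have hd : (wZ f i α β hαβ).d j (j+1) = wD (X := X) (Y := Y) i α β j :=
      CochainComplex.of_d _ _ j
    rw [hd]
    unfold wD
    by_cases c1 : j + 1 < i
    · simp only [dif_pos c1, dif_pos (show j < i by omega)]
      simp
    · by_cases c2 : j + 1 = i
      · subst c2
        simp only [dif_pos (show j < j + 1 by omega),
          dif_neg (show ¬ (j+1 : ℤ) < j+1 by omega),
          dif_pos (show (j+1 : ℤ) = j+1 from rfl)]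
        simp [hαβ]
      · by_cases c3 : j = i
        · subst c3
          simp only [dif_neg (show ¬ (j : ℤ) < j by omega),
            dif_pos (show (j : ℤ) = j from rfl),
            dif_neg (show ¬ (j+1 : ℤ) < j by omega),
            dif_neg (show ¬ (j+1 : ℤ) = j by omega)]
          simp [reassoc_of% hαβ.symm]
        · simp only [dif_neg c1, dif_neg c2, dif_neg c3,
            dif_neg (show ¬ j < i by omega)]
          simp

def wH (hαβ : f.f i = α ≫ β) : wZ f i α β hαβ ⟶ Y where
  f j :=
    if h : j < i then eqToHom (wXo_lt i h) ≫ f.f j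
    else if h2 : j = i then
      eqToHom (wXo_eq i h2) ≫ β ≫ eqToHom (show Y.X i = Y.X j by rw [h2])
    else eqToHom (wXo_gt i (by omega))
  comm' j k hk := by
    obtain rfl : j + 1 = k := hk
    have hd : (wZ f i α β hαβ).d j (j+1) = wD (X := X) (Y := Y) i α β j :=
      CochainComplex.of_d _ _ j
    rw [hd]
    unfold wD
    by_cases c1 : j + 1 < i
    · simp only [dif_pos c1, dif_pos (show j < i by omega)]
      simp
    · by_cases c2 : j + 1 = i
      · subst c2
        simp only [dif_pos (show j < j + 1 by omega),
          dif_neg (show ¬ (j+1 : ℤ) < j+1 by omega),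
          dif_pos (show (j+1 : ℤ) = j+1 from rfl)]
        simp [hαβ]
      · by_cases c3 : j = i
        · subst c3
          simp only [dif_neg (show ¬ (j : ℤ) < j by omega),
            dif_pos (show (j : ℤ) = j from rfl),
            dif_neg (show ¬ (j+1 : ℤ) < j by omega),
            dif_neg (show ¬ (j+1 : ℤ) = j by omega)]
          simp
        · simp only [dif_neg c1, dif_neg c2, dif_neg c3,
            dif_neg (show ¬ j < i by omega)]
          simp

lemma w_fac (hαβ : f.f i = α ≫ β) : f = wG f i α β hαβ ≫ wH f i α β hαβ := by
  apply HomologicalComplex.hom_ext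
  intro j
  show f.f j = (wG f i α β hαβ).f j ≫ (wH f i α β hαβ).f j
  show f.f j =
    (if h : j < i then eqToHom (wXo_lt i h).symm
     else if h2 : j = i then
       eqToHom (show X.X j = X.X i by rw [h2]) ≫ α ≫ eqToHom (wXo_eq i h2).symm
     else f.f j ≫ eqToHom (wXo_gt i (by omega)).symm) ≫
    (if h : j < i then eqToHom (wXo_lt i h) ≫ f.f j
     else if h2 : j = i then
       eqToHom (wXo_eq i h2) ≫ β ≫ eqToHom (show Y.X i = Y.X j by rw [h2])
     else eqToHom (wXo_gt i (by omega)))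
  by_cases c1 : j < i
  · simp only [dif_pos c1]
    simp
  · by_cases c2 : j = i
    · subst c2
      simp only [dif_neg (show ¬ (j : ℤ) < j by omega), dif_pos (show (j : ℤ) = j from rfl)]
      simp [hαβ]
    · simp only [dif_neg c1, dif_neg c2]
      simp

lemma stepA (hX : IsMinimalProjective X) (hY : IsMinimalProjective Y)
    (hf : IrreducibleC f) (hWf : Module.Finite Λᵐᵒᵖ W) (hWp : Module.Projective Λᵐᵒᵖ W)
    (hαβ : f.f i = α ≫ β) : IsSplitMono α ∨ IsSplitEpi β := by
  rcases hf.2.2 (wZ f i α β hαβ) (wZ_minimal f i α β hαβ hX hY hWf hWp)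
    (wG f i α β hαβ) (wH f i α β hαβ) (w_fac f i α β hαβ) with hg | hh
  · left
    have hc := isSplitMono_component hg i
    have e : (wG f i α β hαβ).f i =
        eqToHom (show X.X i = X.X i by rw []) ≫ α ≫ eqToHom (wXo_eq i rfl).symm := by
      show (if h : i < i then _ else if h2 : i = i then _ else _) = _
      rw [dif_neg (show ¬ i < i by omega), dif_pos rfl]
    rw [e] at hc
    simp only [eqToHom_refl, Category.id_comp] at hc
    exact isSplitMono_of_comp_eqToHom _ _ hc
  · right
    have hc := isSplitEpi_component hh i
    have e : (wH f i α β hαβ).f i =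
        eqToHom (wXo_eq i rfl) ≫ β ≫ eqToHom (show Y.X i = Y.X i by rw []) := by
      show (if h : i < i then _ else if h2 : i = i then _ else _) = _
      rw [dif_neg (show ¬ i < i by omega), dif_pos rfl]
    rw [e] at hc
    simp only [eqToHom_refl, Category.comp_id] at hc
    exact isSplitEpi_of_eqToHom_comp _ _ hc
end WGlue
lemma lemA {X Y : Cplx Λ} {f : X ⟶ Y} (hX : IsMinimalProjective X) (hY : IsMinimalProjective Y)
    (hf : IrreducibleC f) (i : ℤ) (hm : ¬ IsSplitMono (f.f i)) (he : ¬ IsSplitEpi (f.f i)) :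
    IrreducibleP (f.f i) :=
  ⟨hm, he, fun _W hWf hWp g h hgh => stepA f i g h hX hY hf hWf hWp hgh⟩

/-- An irreducible morphism between minimal projective complexes is
exactly one of: smonic, sepic, sirreducible. -/
theorem smonic_sepic_or_sirreducible_of_irreducible
    {k Λ : Type} [Field k] [Ring Λ] [Algebra k Λ] [FiniteDimensional k Λ]
    (X Y : Cplx Λ) (hX : IsMinimalProjective X) (hY : IsMinimalProjective Y)
    (f : X ⟶ Y) (hf : IrreducibleC f) :
    (Smonic f ∧ ¬ Sepic f ∧ ¬ Sirreducible f) ∨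
    (¬ Smonic f ∧ Sepic f ∧ ¬ Sirreducible f) ∨
    (¬ Smonic f ∧ ¬ Sepic f ∧ Sirreducible f) := by
  by_cases hsm : Smonic f
  · left
    refine ⟨hsm, ?_, ?_⟩
    · intro hse
      exact hf.1 (isSplitMono_of_components f hsm hse)
    · rintro ⟨i₀, hirr, -, -⟩
      exact hirr.1 (hsm i₀)
  · by_cases hse : Sepic f
    · right; left
      refine ⟨hsm, hse, ?_⟩
      rintro ⟨i₀, hirr, -, -⟩
      exact hirr.2.1 (hse i₀)
    · right; right
      refine ⟨hsm, hse, ?_⟩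
      obtain ⟨a, ha⟩ := not_forall.1 hsm
      obtain ⟨b, hb⟩ := not_forall.1 hse
      have hSbdd : ∀ z : ℤ, ¬ IsSplitMono (f.f z) → z ≤ b := by
        intro z hz
        by_contra hzb
        rcases stepB f b hX hY hf with hl | hr
        · exact hb (hl b le_rfl)
        · exact hz (hr z (by omega))
      have hTbdd : ∀ z : ℤ, ¬ IsSplitEpi (f.f z) → a ≤ z := by
        intro z hz
        by_contra hza
        rcases stepB f (a - 1) hX hY hf with hl | hr
        · exact hz (hl z (by omega))
        · exact ha (hr a (by omega))
      obtain ⟨i₀, hi₀, hi₀max⟩ :=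
        Int.exists_greatest_of_bdd ⟨b, hSbdd⟩ ⟨a, ha⟩
      obtain ⟨j₀, hj₀, hj₀min⟩ :=
        Int.exists_least_of_bdd ⟨a, hTbdd⟩ ⟨b, hb⟩
      have hmono_gt : ∀ j : ℤ, i₀ < j → IsSplitMono (f.f j) := by
        intro j hj
        by_contra hc
        exact absurd (hi₀max j hc) (by omega)
      have hepi_lt : ∀ j : ℤ, j < j₀ → IsSplitEpi (f.f j) := by
        intro j hj
        by_contra hc
        exact absurd (hj₀min j hc) (by omega)
      have hle : i₀ ≤ j₀ := by
        by_contra hc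
        rcases stepB f (i₀ - 1) hX hY hf with hl | hr
        · exact hj₀ (hl j₀ (by omega))
        · exact hi₀ (hr i₀ (by omega))
      rcases eq_or_lt_of_le hle with heq | hlt
      · refine ⟨i₀, lemA hX hY hf i₀ hi₀ (heq ▸ hj₀), fun j hj => hepi_lt j (by omega), hmono_gt⟩
      · exfalso
        have hepi : IsSplitEpi (f.f i₀) := hepi_lt i₀ hlt
        have hmono : IsSplitMono (f.f (i₀ + 1)) := hmono_gt (i₀ + 1) (by omega)
        obtain ⟨se⟩ := hepi.exists_splitEpi
        haveI : Mono (f.f (i₀ + 1)) := by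
          obtain ⟨sm⟩ := hmono.exists_splitMono
          exact ⟨fun g h hgh => by
            have := congrArg (fun q => q ≫ sm.retraction) hgh
            simpa [sm.id] using this⟩
        exact stepBad f i₀ hX hY hf se.section_ se.id hi₀ j₀ hlt hj₀


end ARShapes
end

section
/- Let f : X → Y be an irreducible morphism in C_I(P) between minimal projective complexes. If there exists t ≥ 0 such that X^j = 0 for all j > 0, Y^j = 0 for all j < -t, X^{-(t+1)} ≠ 0, and Y^j ≠ 0 for some j > 0, then f is sirreducible. -/
/-! Statement 2: Lemma 1(b) of the paper. -/

open CategoryTheory CategoryTheory.Limits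

namespace ARShapes

variable {Λ : Type} [Ring Λ]

section Aux

section Helpers

lemma src_isZero_of_isSplitMono {M N : ModuleCat Λᵐᵒᵖ} (φ : M ⟶ N) (h : IsSplitMono φ)
    (hN : IsZero N) : IsZero M := by
  rw [IsZero.iff_id_eq_zero]
  have h1 : φ ≫ h.exists_splitMono.some.retraction = 𝟙 M := h.exists_splitMono.some.id
  have h2 : φ = 0 := hN.eq_of_tgt φ 0
  generalize h.exists_splitMono.some.retraction = r at h1
  rw [h2, zero_comp] at h1
  exact h1.symm

lemma tgt_isZero_of_isSplitEpi {M N : ModuleCat Λᵐᵒᵖ} (φ : M ⟶ N) (h : IsSplitEpi φ)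
    (hM : IsZero M) : IsZero N := by
  rw [IsZero.iff_id_eq_zero]
  have h1 : h.exists_splitEpi.some.section_ ≫ φ = 𝟙 N := h.exists_splitEpi.some.id
  have h2 : φ = 0 := hM.eq_of_src φ 0
  generalize h.exists_splitEpi.some.section_ = r at h1
  rw [h2, comp_zero] at h1
  exact h1.symm

lemma rad_comp_of_left {M N P : ModuleCat Λᵐᵒᵖ} (φ : M ⟶ N) (ψ : N ⟶ P)
    (h : LinearMap.range φ.hom ≤ (Ideal.jacobson (⊥ : Ideal Λᵐᵒᵖ)) • (⊤ : Submodule Λᵐᵒᵖ N)) :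
    LinearMap.range (φ ≫ ψ).hom ≤ (Ideal.jacobson (⊥ : Ideal Λᵐᵒᵖ)) • (⊤ : Submodule Λᵐᵒᵖ P) := by
  show LinearMap.range (ψ.hom.comp φ.hom) ≤ _
  rw [LinearMap.range_comp]
  calc Submodule.map ψ.hom (LinearMap.range φ.hom)
      ≤ Submodule.map ψ.hom ((Ideal.jacobson (⊥ : Ideal Λᵐᵒᵖ)) • ⊤) := Submodule.map_mono h
    _ = (Ideal.jacobson (⊥ : Ideal Λᵐᵒᵖ)) • Submodule.map ψ.hom ⊤ := Submodule.map_smul'' _ _ _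
    _ ≤ _ := smul_mono_right _ le_top

lemma rad_comp_of_right {M N P : ModuleCat Λᵐᵒᵖ} (φ : M ⟶ N) (ψ : N ⟶ P)
    (h : LinearMap.range ψ.hom ≤ (Ideal.jacobson (⊥ : Ideal Λᵐᵒᵖ)) • (⊤ : Submodule Λᵐᵒᵖ P)) :
    LinearMap.range (φ ≫ ψ).hom ≤ (Ideal.jacobson (⊥ : Ideal Λᵐᵒᵖ)) • (⊤ : Submodule Λᵐᵒᵖ P) :=
  le_trans (LinearMap.range_comp_le_range φ.hom ψ.hom) h

lemma rad_conj {M M' N N' : ModuleCat Λᵐᵒᵖ} (e : M' = M) (φ : M ⟶ N) (e' : N = N')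
    (h : LinearMap.range φ.hom ≤ (Ideal.jacobson (⊥ : Ideal Λᵐᵒᵖ)) • (⊤ : Submodule Λᵐᵒᵖ N)) :
    LinearMap.range (eqToHom e ≫ φ ≫ eqToHom e').hom ≤
      (Ideal.jacobson (⊥ : Ideal Λᵐᵒᵖ)) • (⊤ : Submodule Λᵐᵒᵖ N') := by
  subst e; subst e'
  simpa using h

end Helpers

section Glue

variable (L U : Cplx Λ) (n : ℤ) (Z0 : ModuleCat Λᵐᵒᵖ)

/-- Objects of the glued complex: `L` in degrees `≤ n`, `Z0` in degree `n+1`,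
`U` in degrees `≥ n+2`. -/
def gX : ℤ → ModuleCat Λᵐᵒᵖ := fun j => if j ≤ n then L.X j else if j = n + 1 then Z0 else U.X j

lemma gX_low {j : ℤ} (h : j ≤ n) : gX L U n Z0 j = L.X j := if_pos h

lemma gX_mid : gX L U n Z0 (n + 1) = Z0 := by
  show (if _ then _ else _) = _
  rw [if_neg (by omega), if_pos rfl]

lemma gX_high {j : ℤ} (h : n + 1 < j) : gX L U n Z0 j = U.X j := by
  show (if _ then _ else _) = _
  rw [if_neg (by omega), if_neg (by omega)]

variable (l : L.X n ⟶ Z0) (u : Z0 ⟶ U.X (n + 1 + 1))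

/-- Differentials of the glued complex. -/
def gd : ∀ j : ℤ, gX L U n Z0 j ⟶ gX L U n Z0 (j + 1) := fun j =>
  if h1 : j + 1 ≤ n then
    eqToHom (gX_low L U n Z0 (by omega)) ≫ L.d j (j + 1) ≫ eqToHom (gX_low L U n Z0 h1).symm
  else if h2 : j = n then
    eqToHom (by rw [h2]; exact gX_low L U n Z0 le_rfl) ≫ l ≫
      eqToHom (by rw [h2]; exact (gX_mid L U n Z0).symm)
  else if h3 : j = n + 1 then
    eqToHom (by rw [h3]; exact gX_mid L U n Z0) ≫ u ≫
      eqToHom (by rw [h3]; exact (gX_high L U n Z0 (by omega)).symm)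
  else
    eqToHom (gX_high L U n Z0 (by omega)) ≫ U.d j (j + 1) ≫
      eqToHom (gX_high L U n Z0 (by omega)).symm

lemma gd_low {j : ℤ} (h1 : j + 1 ≤ n) :
    gd L U n Z0 l u j =
      eqToHom (gX_low L U n Z0 (by omega)) ≫ L.d j (j + 1) ≫
        eqToHom (gX_low L U n Z0 h1).symm := by
  show dite _ _ _ = _
  rw [dif_pos h1]

lemma gd_mid1 :
    gd L U n Z0 l u n =
      eqToHom (gX_low L U n Z0 le_rfl) ≫ l ≫ eqToHom (gX_mid L U n Z0).symm := by
  show dite _ _ _ = _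
  rw [dif_neg (by omega), dif_pos rfl]

lemma gd_mid2 :
    gd L U n Z0 l u (n + 1) =
      eqToHom (gX_mid L U n Z0) ≫ u ≫ eqToHom (gX_high L U n Z0 (by omega)).symm := by
  show dite _ _ _ = _
  rw [dif_neg (by omega), dif_neg (by omega), dif_pos rfl]

lemma gd_high {j : ℤ} (h : n + 1 < j) :
    gd L U n Z0 l u j =
      eqToHom (gX_high L U n Z0 h) ≫ U.d j (j + 1) ≫
        eqToHom (gX_high L U n Z0 (by omega)).symm := by
  show dite _ _ _ = _
  rw [dif_neg (by omega), dif_neg (by omega), dif_neg (by omega)]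

lemma gd_comp (hl : ∀ jj : ℤ, L.d jj n ≫ l = 0) (hlu : l ≫ u = 0)
    (hu : ∀ jj : ℤ, u ≫ U.d (n + 1 + 1) jj = 0) : ∀ j : ℤ, gd L U n Z0 l u j ≫ gd L U n Z0 l u (j + 1) = 0 := by
  intro j
  by_cases h2 : j = n
  · subst h2
    rw [gd_mid1, gd_mid2]
    simp only [Category.assoc, eqToHom_trans_assoc, eqToHom_refl, Category.id_comp]
    simp [reassoc_of% hlu]
  · by_cases h3 : j = n + 1
    · subst h3
      rw [gd_mid2, gd_high L U n Z0 l u (by omega)]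
      simp only [Category.assoc, eqToHom_trans_assoc, eqToHom_refl, Category.id_comp]
      simp [reassoc_of% (hu (n + 1 + 1 + 1))]
    · by_cases h1 : j + 1 ≤ n
      · by_cases h4 : j + 1 = n
        · subst h4
          rw [gd_low L U (j + 1) Z0 l u le_rfl, gd_mid1 L U (j + 1) Z0 l u]
          simp only [Category.assoc, eqToHom_trans_assoc, eqToHom_refl, Category.id_comp]
          simp [reassoc_of% (hl j)]
        · rw [gd_low L U n Z0 l u h1, gd_low L U n Z0 l u (by omega)]
          simp only [Category.assoc, eqToHom_trans_assoc, eqToHom_refl, Category.id_comp]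
          simp
      · rw [gd_high L U n Z0 l u (by omega), gd_high L U n Z0 l u (by omega)]
        simp only [Category.assoc, eqToHom_trans_assoc, eqToHom_refl, Category.id_comp]
        simp

/-- The glued complex. -/
abbrev glueC (hl : ∀ jj : ℤ, L.d jj n ≫ l = 0) (hlu : l ≫ u = 0)
    (hu : ∀ jj : ℤ, u ≫ U.d (n + 1 + 1) jj = 0) : Cplx Λ where
  X := gX L U n Z0
  d i j := if h : i + 1 = j then gd L U n Z0 l u i ≫ eqToHom (congrArg (gX L U n Z0) h) else 0
  shape i j hij := dif_neg hij
  d_comp_d' i j k hij hjk := by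
    obtain rfl : i + 1 = j := hij
    obtain rfl : i + 1 + 1 = k := hjk
    rw [dif_pos rfl, dif_pos rfl]
    simp only [eqToHom_refl, Category.comp_id, Category.assoc]
    exact gd_comp L U n Z0 l u hl hlu hu i

lemma glueC_X (hl : ∀ jj : ℤ, L.d jj n ≫ l = 0) (hlu : l ≫ u = 0)
    (hu : ∀ jj : ℤ, u ≫ U.d (n + 1 + 1) jj = 0) (j : ℤ) :
    (glueC L U n Z0 l u hl hlu hu).X j = gX L U n Z0 j := rfl

lemma glueC_d (hl : ∀ jj : ℤ, L.d jj n ≫ l = 0) (hlu : l ≫ u = 0)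
    (hu : ∀ jj : ℤ, u ≫ U.d (n + 1 + 1) jj = 0) (j : ℤ) :
    (glueC L U n Z0 l u hl hlu hu).d j (j + 1) = gd L U n Z0 l u j := by
  dsimp only [glueC]
  rw [dif_pos rfl]
  simp



lemma rad_conj' {M M' N N' : ModuleCat Λᵐᵒᵖ} (e : M' = M) (φ : M ⟶ N) (e' : N = N')
    (h : LinearMap.range φ.hom ≤ (Ideal.jacobson (⊥ : Ideal Λᵐᵒᵖ)) • (⊤ : Submodule Λᵐᵒᵖ N)) :
    LinearMap.range (eqToHom e ≫ φ ≫ eqToHom e').hom ≤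
      (Ideal.jacobson (⊥ : Ideal Λᵐᵒᵖ)) • (⊤ : Submodule Λᵐᵒᵖ N') := by
  subst e; subst e'
  simpa using h

lemma glueC_min (hl : ∀ jj : ℤ, L.d jj n ≫ l = 0) (hlu : l ≫ u = 0)
    (hu : ∀ jj : ℤ, u ≫ U.d (n + 1 + 1) jj = 0)
    (hL : IsMinimalProjective L) (hU : IsMinimalProjective U)
    (hZf : Module.Finite Λᵐᵒᵖ Z0) (hZp : Module.Projective Λᵐᵒᵖ Z0)
    (hlr : LinearMap.range l.hom ≤ (Ideal.jacobson (⊥ : Ideal Λᵐᵒᵖ)) • (⊤ : Submodule Λᵐᵒᵖ Z0))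
    (hur : LinearMap.range u.hom ≤
      (Ideal.jacobson (⊥ : Ideal Λᵐᵒᵖ)) • (⊤ : Submodule Λᵐᵒᵖ (U.X (n + 1 + 1)))) :
    IsMinimalProjective (glueC L U n Z0 l u hl hlu hu) := by
  refine ⟨fun j => ?_, fun j => ?_, fun j => ?_⟩
  · show Module.Finite Λᵐᵒᵖ (gX L U n Z0 j)
    by_cases h : j ≤ n
    · rw [gX_low L U n Z0 h]; exact hL.1 j
    · by_cases h2 : j = n + 1
      · subst h2; rw [gX_mid L U n Z0]; exact hZf
      · rw [gX_high L U n Z0 (by omega)]; exact hU.1 j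
  · show Module.Projective Λᵐᵒᵖ (gX L U n Z0 j)
    by_cases h : j ≤ n
    · rw [gX_low L U n Z0 h]; exact hL.2.1 j
    · by_cases h2 : j = n + 1
      · subst h2; rw [gX_mid L U n Z0]; exact hZp
      · rw [gX_high L U n Z0 (by omega)]; exact hU.2.1 j
  · rw [glueC_d]
    by_cases h2 : j = n
    · subst h2
      rw [gd_mid1]
      exact rad_conj' _ _ _ hlr
    · by_cases h3 : j = n + 1
      · subst h3
        rw [gd_mid2]
        exact rad_conj' _ _ _ hur
      · by_cases h1 : j + 1 ≤ n
        · rw [gd_low L U n Z0 l u h1]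
          exact rad_conj' _ _ _ (hL.2.2 j)
        · rw [gd_high L U n Z0 l u (by omega)]
          exact rad_conj' _ _ _ (hU.2.2 j)

end Glue

section ConsA

variable (X Y : Cplx Λ) (f : X ⟶ Y) (n : ℤ) (Z0 : ModuleCat Λᵐᵒᵖ)
  (g₀ : X.X (n + 1) ⟶ Z0) (h₀ : Z0 ⟶ Y.X (n + 1))

lemma A_hl : ∀ jj : ℤ, X.d jj n ≫ (X.d n (n + 1) ≫ g₀) = 0 := by
  intro jj
  rw [← Category.assoc, HomologicalComplex.d_comp_d, zero_comp]

lemma A_hu : ∀ jj : ℤ, (h₀ ≫ Y.d (n + 1) (n + 1 + 1)) ≫ Y.d (n + 1 + 1) jj = 0 := by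
  intro jj
  rw [Category.assoc, HomologicalComplex.d_comp_d, comp_zero]

variable (hgh : g₀ ≫ h₀ = f.f (n + 1))

include hgh in
lemma A_hlu : (X.d n (n + 1) ≫ g₀) ≫ (h₀ ≫ Y.d (n + 1) (n + 1 + 1)) = 0 := by
  rw [Category.assoc, ← Category.assoc g₀, hgh, HomologicalComplex.Hom.comm,
    ← Category.assoc, HomologicalComplex.d_comp_d, zero_comp]

/-- The glued complex for a factorization of `f` in degree `n+1`. -/
abbrev glueA : Cplx Λ :=
  glueC X Y n Z0 (X.d n (n + 1) ≫ g₀) (h₀ ≫ Y.d (n + 1) (n + 1 + 1))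
    (A_hl X n Z0 g₀) (A_hlu X Y f n Z0 g₀ h₀ hgh) (A_hu Y n Z0 h₀)

/-- Components of the map `X ⟶ glueA`. -/
def gaf : ∀ j : ℤ, X.X j ⟶ gX X Y n Z0 j := fun j =>
  if h : j ≤ n then eqToHom (gX_low X Y n Z0 h).symm
  else if h2 : j = n + 1 then
    eqToHom (congrArg X.X h2) ≫ g₀ ≫ eqToHom (by rw [h2]; exact (gX_mid X Y n Z0).symm)
  else f.f j ≫ eqToHom (gX_high X Y n Z0 (by omega)).symm

lemma gaf_low {j : ℤ} (h : j ≤ n) :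
    gaf X Y f n Z0 g₀ j = eqToHom (gX_low X Y n Z0 h).symm := dif_pos h

lemma gaf_mid :
    gaf X Y f n Z0 g₀ (n + 1) = g₀ ≫ eqToHom (gX_mid X Y n Z0).symm := by
  show dite _ _ _ = _
  rw [dif_neg (by omega), dif_pos rfl]
  simp

lemma gaf_high {j : ℤ} (h : n + 1 < j) :
    gaf X Y f n Z0 g₀ j = f.f j ≫ eqToHom (gX_high X Y n Z0 h).symm := by
  show dite _ _ _ = _
  rw [dif_neg (by omega), dif_neg (by omega)]

/-- Components of the map `glueA ⟶ Y`. -/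
def haf : ∀ j : ℤ, gX X Y n Z0 j ⟶ Y.X j := fun j =>
  if h : j ≤ n then eqToHom (gX_low X Y n Z0 h) ≫ f.f j
  else if h2 : j = n + 1 then
    eqToHom (by rw [h2]; exact gX_mid X Y n Z0) ≫ h₀ ≫ eqToHom (congrArg Y.X h2.symm)
  else eqToHom (gX_high X Y n Z0 (by omega))

lemma haf_low {j : ℤ} (h : j ≤ n) :
    haf X Y f n Z0 h₀ j = eqToHom (gX_low X Y n Z0 h) ≫ f.f j := dif_pos h

lemma haf_mid :
    haf X Y f n Z0 h₀ (n + 1) = eqToHom (gX_mid X Y n Z0) ≫ h₀ := by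
  show dite _ _ _ = _
  rw [dif_neg (by omega), dif_pos rfl]
  simp

lemma haf_high {j : ℤ} (h : n + 1 < j) :
    haf X Y f n Z0 h₀ j = eqToHom (gX_high X Y n Z0 h) := by
  show dite _ _ _ = _
  rw [dif_neg (by omega), dif_neg (by omega)]

/-- The chain map `X ⟶ glueA`. -/
def homGA : X ⟶ glueA X Y f n Z0 g₀ h₀ hgh where
  f := gaf X Y f n Z0 g₀
  comm' i j hij := by
    obtain rfl : i + 1 = j := hij
    show gaf X Y f n Z0 g₀ i ≫ (glueA X Y f n Z0 g₀ h₀ hgh).d i (i + 1)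
        = X.d i (i + 1) ≫ gaf X Y f n Z0 g₀ (i + 1)
    rw [show (glueA X Y f n Z0 g₀ h₀ hgh).d i (i + 1)
        = gd X Y n Z0 (X.d n (n + 1) ≫ g₀) (h₀ ≫ Y.d (n + 1) (n + 1 + 1)) i from
      glueC_d _ _ _ _ _ _ _ _ _ i]
    by_cases h2 : i = n
    · subst h2
      rw [gd_mid1 X Y i Z0, gaf_low X Y f i Z0 g₀ le_rfl, gaf_mid X Y f i Z0 g₀]
      simp
    · by_cases h3 : i = n + 1
      · subst h3
        rw [gd_mid2, gaf_mid, gaf_high X Y f n Z0 g₀ (by omega)]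
        simp only [Category.assoc, eqToHom_trans_assoc, eqToHom_refl, Category.id_comp]
        rw [← Category.assoc g₀, hgh, HomologicalComplex.Hom.comm_assoc]
      · by_cases h1 : i + 1 ≤ n
        · rw [gd_low X Y n Z0 _ _ h1, gaf_low X Y f n Z0 g₀ (by omega),
            gaf_low X Y f n Z0 g₀ h1]
          simp
        · rw [gd_high X Y n Z0 _ _ (by omega), gaf_high X Y f n Z0 g₀ (by omega),
            gaf_high X Y f n Z0 g₀ (by omega)]
          simp [HomologicalComplex.Hom.comm_assoc]

/-- The chain map `glueA ⟶ Y`. -/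
def homHA : glueA X Y f n Z0 g₀ h₀ hgh ⟶ Y where
  f := haf X Y f n Z0 h₀
  comm' i j hij := by
    obtain rfl : i + 1 = j := hij
    show haf X Y f n Z0 h₀ i ≫ Y.d i (i + 1)
        = (glueA X Y f n Z0 g₀ h₀ hgh).d i (i + 1) ≫ haf X Y f n Z0 h₀ (i + 1)
    rw [show (glueA X Y f n Z0 g₀ h₀ hgh).d i (i + 1)
        = gd X Y n Z0 (X.d n (n + 1) ≫ g₀) (h₀ ≫ Y.d (n + 1) (n + 1 + 1)) i from
      glueC_d _ _ _ _ _ _ _ _ _ i]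
    by_cases h2 : i = n
    · subst h2
      rw [gd_mid1 X Y i Z0, haf_low X Y f i Z0 h₀ le_rfl, haf_mid X Y f i Z0 h₀]
      simp only [Category.assoc, eqToHom_trans_assoc, eqToHom_refl, Category.id_comp]
      rw [hgh, HomologicalComplex.Hom.comm]
    · by_cases h3 : i = n + 1
      · subst h3
        rw [gd_mid2, haf_mid, haf_high X Y f n Z0 h₀ (by omega)]
        simp
      · by_cases h1 : i + 1 ≤ n
        · rw [gd_low X Y n Z0 _ _ h1, haf_low X Y f n Z0 h₀ (by omega),
            haf_low X Y f n Z0 h₀ h1]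
          simp [HomologicalComplex.Hom.comm]
        · rw [gd_high X Y n Z0 _ _ (by omega), haf_high X Y f n Z0 h₀ (by omega),
            haf_high X Y f n Z0 h₀ (by omega)]
          simp

lemma fac_A : f = homGA X Y f n Z0 g₀ h₀ hgh ≫ homHA X Y f n Z0 g₀ h₀ hgh := by
  apply HomologicalComplex.hom_ext
  intro j
  rw [HomologicalComplex.comp_f]
  show f.f j = gaf X Y f n Z0 g₀ j ≫ haf X Y f n Z0 h₀ j
  by_cases h : j ≤ n
  · rw [gaf_low X Y f n Z0 g₀ h, haf_low X Y f n Z0 h₀ h]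
    simp
  · by_cases h2 : j = n + 1
    · subst h2
      rw [gaf_mid, haf_mid]
      simp [hgh]
    · rw [gaf_high X Y f n Z0 g₀ (by omega), haf_high X Y f n Z0 h₀ (by omega)]
      simp

end ConsA

section Dichotomy

variable (X Y : Cplx Λ) (f : X ⟶ Y)

lemma factor_dichotomy (hX : IsMinimalProjective X) (hY : IsMinimalProjective Y)
    (hf : IrreducibleC f) (n : ℤ) (Z0 : ModuleCat Λᵐᵒᵖ)
    (hZf : Module.Finite Λᵐᵒᵖ Z0) (hZp : Module.Projective Λᵐᵒᵖ Z0)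
    (g₀ : X.X (n + 1) ⟶ Z0) (h₀ : Z0 ⟶ Y.X (n + 1)) (hgh : g₀ ≫ h₀ = f.f (n + 1)) :
    (IsSplitMono g₀ ∧ ∀ j, n + 1 < j → IsSplitMono (f.f j)) ∨
      (IsSplitEpi h₀ ∧ ∀ j, j ≤ n → IsSplitEpi (f.f j)) := by
  have hlr : LinearMap.range (X.d n (n + 1) ≫ g₀).hom ≤
      (Ideal.jacobson (⊥ : Ideal Λᵐᵒᵖ)) • (⊤ : Submodule Λᵐᵒᵖ Z0) :=
    rad_comp_of_left _ _ (hX.2.2 n)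
  have hur : LinearMap.range (h₀ ≫ Y.d (n + 1) (n + 1 + 1)).hom ≤
      (Ideal.jacobson (⊥ : Ideal Λᵐᵒᵖ)) • (⊤ : Submodule Λᵐᵒᵖ (Y.X (n + 1 + 1))) :=
    rad_comp_of_right _ _ (hY.2.2 (n + 1))
  have hmin : IsMinimalProjective (glueA X Y f n Z0 g₀ h₀ hgh) :=
    glueC_min X Y n Z0 _ _ _ _ _ hX hY hZf hZp hlr hur
  rcases hf.2.2 _ hmin _ _ (fac_A X Y f n Z0 g₀ h₀ hgh) with hm | he
  · left
    obtain ⟨ρ⟩ := hm.exists_splitMono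
    have hid : homGA X Y f n Z0 g₀ h₀ hgh ≫ ρ.retraction = 𝟙 X := ρ.id
    constructor
    · have h2 : gaf X Y f n Z0 g₀ (n + 1) ≫ ρ.retraction.f (n + 1) = 𝟙 (X.X (n + 1)) :=
        congrArg (fun φ => HomologicalComplex.Hom.f φ (n + 1)) hid
      rw [gaf_mid, Category.assoc] at h2
      exact IsSplitMono.mk' ⟨_, h2⟩
    · intro j hj
      have h2 : gaf X Y f n Z0 g₀ j ≫ ρ.retraction.f j = 𝟙 (X.X j) :=
        congrArg (fun φ => HomologicalComplex.Hom.f φ j) hid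
      rw [gaf_high X Y f n Z0 g₀ hj, Category.assoc] at h2
      exact IsSplitMono.mk' ⟨_, h2⟩
  · right
    obtain ⟨σ⟩ := he.exists_splitEpi
    have hid : σ.section_ ≫ homHA X Y f n Z0 g₀ h₀ hgh = 𝟙 Y := σ.id
    constructor
    · have h2 : σ.section_.f (n + 1) ≫ haf X Y f n Z0 h₀ (n + 1) = 𝟙 (Y.X (n + 1)) :=
        congrArg (fun φ => HomologicalComplex.Hom.f φ (n + 1)) hid
      rw [haf_mid, ← Category.assoc] at h2
      exact IsSplitEpi.mk' ⟨_, h2⟩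
    · intro j hj
      have h2 : σ.section_.f j ≫ haf X Y f n Z0 h₀ j = 𝟙 (Y.X j) :=
        congrArg (fun φ => HomologicalComplex.Hom.f φ j) hid
      rw [haf_low X Y f n Z0 h₀ hj, ← Category.assoc] at h2
      exact IsSplitEpi.mk' ⟨_, h2⟩

end Dichotomy

section ConsB

variable (X Y : Cplx Λ) (f : X ⟶ Y) (n : ℤ)
  (s : Y.X (n + 1) ⟶ X.X (n + 1)) (hs : s ≫ f.f (n + 1) = 𝟙 (Y.X (n + 1)))
  (s' : Y.X n ⟶ X.X n) (hs' : s' ≫ f.f n = 𝟙 (Y.X n))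
  (r : Y.X (n + 1 + 1) ⟶ X.X (n + 1 + 1)) (hr : f.f (n + 1 + 1) ≫ r = 𝟙 (X.X (n + 1 + 1)))

include hs hr in
lemma B_key : f.f (n + 1) ≫ s ≫ X.d (n + 1) (n + 1 + 1) = X.d (n + 1) (n + 1 + 1) := by
  have h1 : (f.f (n + 1) ≫ s ≫ X.d (n + 1) (n + 1 + 1)) ≫ f.f (n + 1 + 1)
      = X.d (n + 1) (n + 1 + 1) ≫ f.f (n + 1 + 1) := by
    simp only [Category.assoc]
    rw [← HomologicalComplex.Hom.comm f (n + 1) (n + 1 + 1)]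
    rw [reassoc_of% hs]
  have h2 := congrArg (fun φ => φ ≫ r) h1
  simp only [Category.assoc] at h2
  rw [hr] at h2
  simpa using h2

include hs hs' hr in
lemma B_hlu : Y.d n (n + 1) ≫ (s ≫ X.d (n + 1) (n + 1 + 1)) = 0 := by
  have e1 : Y.d n (n + 1) = s' ≫ X.d n (n + 1) ≫ f.f (n + 1) := by
    rw [← HomologicalComplex.Hom.comm f n (n + 1), ← Category.assoc, hs', Category.id_comp]
  rw [e1]
  simp only [Category.assoc]
  rw [B_key X Y f n s hs r hr]
  rw [HomologicalComplex.d_comp_d, comp_zero]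

lemma B_hl : ∀ jj : ℤ, Y.d jj n ≫ Y.d n (n + 1) = 0 := fun jj =>
  HomologicalComplex.d_comp_d Y jj n (n + 1)

lemma B_hu : ∀ jj : ℤ, (s ≫ X.d (n + 1) (n + 1 + 1)) ≫ X.d (n + 1 + 1) jj = 0 := by
  intro jj
  rw [Category.assoc, HomologicalComplex.d_comp_d, comp_zero]

/-- The glued complex used to exclude the mixed case. -/
abbrev glueB : Cplx Λ :=
  glueC Y X n (Y.X (n + 1)) (Y.d n (n + 1)) (s ≫ X.d (n + 1) (n + 1 + 1))
    (B_hl Y n) (B_hlu X Y f n s hs s' hs' r hr) (B_hu X Y n s)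

/-- Components of the map `X ⟶ glueB`. -/
def ubf : ∀ j : ℤ, X.X j ⟶ gX Y X n (Y.X (n + 1)) j := fun j =>
  if h : j ≤ n then f.f j ≫ eqToHom (gX_low Y X n _ h).symm
  else if h2 : j = n + 1 then
    eqToHom (congrArg X.X h2) ≫ f.f (n + 1) ≫ eqToHom (by rw [h2]; exact (gX_mid Y X n _).symm)
  else eqToHom (gX_high Y X n _ (by omega)).symm

lemma ubf_low {j : ℤ} (h : j ≤ n) :
    ubf X Y f n j = f.f j ≫ eqToHom (gX_low Y X n _ h).symm := dif_pos h

lemma ubf_mid :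
    ubf X Y f n (n + 1) = f.f (n + 1) ≫ eqToHom (gX_mid Y X n _).symm := by
  show dite _ _ _ = _
  rw [dif_neg (by omega), dif_pos rfl]
  simp

lemma ubf_high {j : ℤ} (h : n + 1 < j) :
    ubf X Y f n j = eqToHom (gX_high Y X n _ h).symm := by
  show dite _ _ _ = _
  rw [dif_neg (by omega), dif_neg (by omega)]

/-- Components of the map `glueB ⟶ Y`. -/
def vbf : ∀ j : ℤ, gX Y X n (Y.X (n + 1)) j ⟶ Y.X j := fun j =>
  if h : j ≤ n then eqToHom (gX_low Y X n _ h)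
  else if h2 : j = n + 1 then
    eqToHom (by rw [h2]; exact gX_mid Y X n _) ≫ eqToHom (congrArg Y.X h2.symm)
  else eqToHom (gX_high Y X n _ (by omega)) ≫ f.f j

lemma vbf_low {j : ℤ} (h : j ≤ n) :
    vbf X Y f n j = eqToHom (gX_low Y X n _ h) := dif_pos h

lemma vbf_mid :
    vbf X Y f n (n + 1) = eqToHom (gX_mid Y X n _) := by
  show dite _ _ _ = _
  rw [dif_neg (by omega), dif_pos rfl]
  simp

lemma vbf_high {j : ℤ} (h : n + 1 < j) :
    vbf X Y f n j = eqToHom (gX_high Y X n _ h) ≫ f.f j := by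
  show dite _ _ _ = _
  rw [dif_neg (by omega), dif_neg (by omega)]

/-- The chain map `X ⟶ glueB`. -/
def homUB : X ⟶ glueB X Y f n s hs s' hs' r hr where
  f := ubf X Y f n
  comm' i j hij := by
    obtain rfl : i + 1 = j := hij
    show ubf X Y f n i ≫ (glueB X Y f n s hs s' hs' r hr).d i (i + 1)
        = X.d i (i + 1) ≫ ubf X Y f n (i + 1)
    rw [show (glueB X Y f n s hs s' hs' r hr).d i (i + 1)
        = gd Y X n (Y.X (n + 1)) (Y.d n (n + 1)) (s ≫ X.d (n + 1) (n + 1 + 1)) i from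
      glueC_d _ _ _ _ _ _ _ _ _ i]
    by_cases h2 : i = n
    · subst h2
      rw [gd_mid1 Y X i (Y.X (i + 1)), ubf_low X Y f i le_rfl, ubf_mid X Y f i]
      simp [HomologicalComplex.Hom.comm_assoc]
    · by_cases h3 : i = n + 1
      · subst h3
        rw [gd_mid2, ubf_mid X Y f n, ubf_high X Y f n (by omega)]
        simp only [Category.assoc, eqToHom_trans_assoc, eqToHom_refl, Category.id_comp]
        rw [reassoc_of% (B_key X Y f n s hs r hr)]
      · by_cases h1 : i + 1 ≤ n
        · rw [gd_low Y X n _ _ _ h1, ubf_low X Y f n (by omega), ubf_low X Y f n h1]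
          simp [HomologicalComplex.Hom.comm_assoc]
        · rw [gd_high Y X n _ _ _ (by omega), ubf_high X Y f n (by omega),
            ubf_high X Y f n (by omega)]
          simp

/-- The chain map `glueB ⟶ Y`. -/
def homVB : glueB X Y f n s hs s' hs' r hr ⟶ Y where
  f := vbf X Y f n
  comm' i j hij := by
    obtain rfl : i + 1 = j := hij
    show vbf X Y f n i ≫ Y.d i (i + 1)
        = (glueB X Y f n s hs s' hs' r hr).d i (i + 1) ≫ vbf X Y f n (i + 1)
    rw [show (glueB X Y f n s hs s' hs' r hr).d i (i + 1)
        = gd Y X n (Y.X (n + 1)) (Y.d n (n + 1)) (s ≫ X.d (n + 1) (n + 1 + 1)) i from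
      glueC_d _ _ _ _ _ _ _ _ _ i]
    by_cases h2 : i = n
    · subst h2
      rw [gd_mid1 Y X i (Y.X (i + 1)), vbf_low X Y f i le_rfl, vbf_mid X Y f i]
      simp
    · by_cases h3 : i = n + 1
      · subst h3
        rw [gd_mid2, vbf_mid X Y f n, vbf_high X Y f n (by omega)]
        simp only [Category.assoc, eqToHom_trans_assoc, eqToHom_refl, Category.id_comp]
        rw [← HomologicalComplex.Hom.comm f (n + 1) (n + 1 + 1)]
        rw [reassoc_of% hs]
      · by_cases h1 : i + 1 ≤ n
        · rw [gd_low Y X n _ _ _ h1, vbf_low X Y f n (by omega), vbf_low X Y f n h1]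
          simp
        · rw [gd_high Y X n _ _ _ (by omega), vbf_high X Y f n (by omega),
            vbf_high X Y f n (by omega)]
          simp [HomologicalComplex.Hom.comm]

lemma fac_B : f = homUB X Y f n s hs s' hs' r hr ≫ homVB X Y f n s hs s' hs' r hr := by
  apply HomologicalComplex.hom_ext
  intro j
  rw [HomologicalComplex.comp_f]
  show f.f j = ubf X Y f n j ≫ vbf X Y f n j
  by_cases h : j ≤ n
  · rw [ubf_low X Y f n h, vbf_low X Y f n h]
    simp
  · by_cases h2 : j = n + 1
    · subst h2
      rw [ubf_mid X Y f n, vbf_mid X Y f n]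
      simp
    · rw [ubf_high X Y f n (by omega), vbf_high X Y f n (by omega)]
      simp

include hs hs' hr in
lemma mixed_dichotomy (hX : IsMinimalProjective X) (hY : IsMinimalProjective Y)
    (hf : IrreducibleC f) :
    (∀ j, j ≤ n + 1 → IsSplitMono (f.f j)) ∨ (∀ j, n + 1 < j → IsSplitEpi (f.f j)) := by
  have hur : LinearMap.range (s ≫ X.d (n + 1) (n + 1 + 1)).hom ≤
      (Ideal.jacobson (⊥ : Ideal Λᵐᵒᵖ)) • (⊤ : Submodule Λᵐᵒᵖ (X.X (n + 1 + 1))) :=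
    rad_comp_of_right _ _ (hX.2.2 (n + 1))
  have hmin : IsMinimalProjective (glueB X Y f n s hs s' hs' r hr) :=
    glueC_min Y X n (Y.X (n + 1)) _ _ _ _ _ hY hX (hY.1 (n + 1)) (hY.2.1 (n + 1))
      (hY.2.2 n) hur
  rcases hf.2.2 _ hmin _ _ (fac_B X Y f n s hs s' hs' r hr) with hm | he
  · left
    obtain ⟨ρ⟩ := hm.exists_splitMono
    have hid : homUB X Y f n s hs s' hs' r hr ≫ ρ.retraction = 𝟙 X := ρ.id
    intro j hj
    rcases lt_or_eq_of_le hj with hlt | heq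
    · have h2 : ubf X Y f n j ≫ ρ.retraction.f j = 𝟙 (X.X j) :=
        congrArg (fun φ => HomologicalComplex.Hom.f φ j) hid
      rw [ubf_low X Y f n (by omega), Category.assoc] at h2
      exact IsSplitMono.mk' ⟨_, h2⟩
    · subst heq
      have h2 : ubf X Y f n (n + 1) ≫ ρ.retraction.f (n + 1) = 𝟙 (X.X (n + 1)) :=
        congrArg (fun φ => HomologicalComplex.Hom.f φ (n + 1)) hid
      rw [ubf_mid X Y f n, Category.assoc] at h2
      exact IsSplitMono.mk' ⟨_, h2⟩
  · right
    obtain ⟨σ⟩ := he.exists_splitEpi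
    have hid : σ.section_ ≫ homVB X Y f n s hs s' hs' r hr = 𝟙 Y := σ.id
    intro j hj
    have h2 : σ.section_.f j ≫ vbf X Y f n j = 𝟙 (Y.X j) :=
      congrArg (fun φ => HomologicalComplex.Hom.f φ j) hid
    rw [vbf_high X Y f n hj, ← Category.assoc] at h2
    exact IsSplitEpi.mk' ⟨_, h2⟩

end ConsB

end Aux

section Main

theorem sirreducible_of_irreducible''
    (X Y : Cplx Λ) (hX : IsMinimalProjective X) (hY : IsMinimalProjective Y)
    (f : X ⟶ Y) (hf : IrreducibleC f) (t : ℤ) (ht : 0 ≤ t)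
    (h₁ : ∀ j : ℤ, 0 < j → IsZero (X.X j))
    (h₂ : ∀ j : ℤ, j < -t → IsZero (Y.X j))
    (h₃ : ¬ IsZero (X.X (-(t + 1))))
    (h₄ : ∃ j : ℤ, 0 < j ∧ ¬ IsZero (Y.X j)) :
    ∃ i₀ : ℤ, (¬ IsSplitMono (f.f i₀) ∧ ¬ IsSplitEpi (f.f i₀) ∧
      ∀ (Z : ModuleCat Λᵐᵒᵖ), Module.Finite Λᵐᵒᵖ Z → Module.Projective Λᵐᵒᵖ Z →
        ∀ (g : X.X i₀ ⟶ Z) (h : Z ⟶ Y.X i₀), f.f i₀ = g ≫ h → IsSplitMono g ∨ IsSplitEpi h) ∧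
      (∀ i : ℤ, i < i₀ → IsSplitEpi (f.f i)) ∧ (∀ i : ℤ, i₀ < i → IsSplitMono (f.f i)) := by
  classical
  obtain ⟨j₀, hj₀pos, hj₀ne⟩ := h₄
  have hzY : IsZero (Y.X (-(t + 1))) := h₂ _ (by omega)
  have notMono : ¬ IsSplitMono (f.f (-(t + 1))) := fun hm =>
    h₃ (src_isZero_of_isSplitMono _ hm hzY)
  have hzX : IsZero (X.X j₀) := h₁ _ hj₀pos
  have notEpi : ¬ IsSplitEpi (f.f j₀) := fun he =>
    hj₀ne (tgt_isZero_of_isSplitEpi _ he hzX)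
  have hPbd : ∀ z : ℤ, (∀ j : ℤ, z ≤ j → IsSplitMono (f.f j)) → -t ≤ z := by
    intro z hz
    by_contra hc
    exact notMono (hz _ (by omega))
  have hPinh : ∀ j : ℤ, j₀ + 1 ≤ j → IsSplitMono (f.f j) := by
    rcases factor_dichotomy X Y f hX hY hf j₀ (Y.X (j₀ + 1)) (hY.1 (j₀ + 1)) (hY.2.1 (j₀ + 1))
      (f.f (j₀ + 1)) (𝟙 _) (Category.comp_id _) with ⟨hm, hms⟩ | ⟨_, heps⟩
    · intro j hj
      rcases hj.eq_or_lt with rfl | hlt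
      · exact hm
      · exact hms j hlt
    · exact absurd (heps j₀ le_rfl) notEpi
  obtain ⟨ℓ, hℓP, hℓmin⟩ :=
    Int.exists_least_of_bdd (P := fun i : ℤ => ∀ j : ℤ, i ≤ j → IsSplitMono (f.f j))
      ⟨-t, hPbd⟩ ⟨j₀ + 1, hPinh⟩
  have hℓlb : -t ≤ ℓ := hPbd ℓ hℓP
  obtain ⟨m, rfl⟩ : ∃ m : ℤ, ℓ = m + 1 + 1 := ⟨ℓ - 2, by omega⟩
  have habove : ∀ j : ℤ, m + 1 < j → IsSplitMono (f.f j) := fun j hj => hℓP j (by omega)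
  have hnotmono : ¬ IsSplitMono (f.f (m + 1)) := by
    intro h
    have hP : ∀ j : ℤ, m + 1 ≤ j → IsSplitMono (f.f j) := by
      intro j hj
      rcases hj.eq_or_lt with rfl | hlt
      · exact h
      · exact habove j hlt
    have := hℓmin _ hP
    omega
  have hbelow : ∀ j : ℤ, j ≤ m → IsSplitEpi (f.f j) := by
    rcases factor_dichotomy X Y f hX hY hf m (Y.X (m + 1)) (hY.1 (m + 1)) (hY.2.1 (m + 1))
      (f.f (m + 1)) (𝟙 _) (Category.comp_id _) with ⟨hm, _⟩ | ⟨_, heps⟩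
    · exact absurd hm hnotmono
    · exact heps
  have hnotepi : ¬ IsSplitEpi (f.f (m + 1)) := by
    intro he
    have hj₀gt : m + 1 < j₀ := by
      by_contra hc
      push_neg at hc
      rcases hc.eq_or_lt with heq | hlt
      · exact notEpi (by rw [heq]; exact he)
      · exact notEpi (hbelow j₀ (by omega))
    obtain ⟨se⟩ := he.exists_splitEpi
    obtain ⟨se'⟩ := (hbelow m le_rfl).exists_splitEpi
    obtain ⟨rm⟩ := (habove (m + 1 + 1) (by omega)).exists_splitMono
    rcases mixed_dichotomy X Y f m se.section_ se.id se'.section_ se'.id rm.retraction rm.id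
      hX hY hf with hL | hR
    · exact notMono (hL _ (by omega))
    · exact notEpi (hR j₀ hj₀gt)
  refine ⟨m + 1, ⟨hnotmono, hnotepi, ?_⟩, fun i hi => hbelow i (by omega),
    fun i hi => habove i hi⟩
  intro Z hZf hZp g h heq
  rcases factor_dichotomy X Y f hX hY hf m Z hZf hZp g h heq.symm with ⟨hm, _⟩ | ⟨hh, _⟩
  · exact Or.inl hm
  · exact Or.inr hh

end Main

/-- If `f : X ⟶ Y` is irreducible in `C_I(P)`, `X` vanishes in positive
degrees, `Y` vanishes in degrees `< -t` (for some `t ≥ 0`), `X^{-(t+1)} ≠ 0` and `Y` is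
nonzero in some positive degree, then `f` is sirreducible. -/
theorem sirreducible_of_irreducible
    {k Λ : Type} [Field k] [Ring Λ] [Algebra k Λ] [FiniteDimensional k Λ]
    (X Y : Cplx Λ) (hX : IsMinimalProjective X) (hY : IsMinimalProjective Y)
    (f : X ⟶ Y) (hf : IrreducibleC f) (t : ℤ) (ht : 0 ≤ t)
    (h₁ : ∀ j : ℤ, 0 < j → IsZero (X.X j))
    (h₂ : ∀ j : ℤ, j < -t → IsZero (Y.X j))
    (h₃ : ¬ IsZero (X.X (-(t + 1))))
    (h₄ : ∃ j : ℤ, 0 < j ∧ ¬ IsZero (Y.X j)) :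
    Sirreducible f := by
  exact sirreducible_of_irreducible'' X Y hX hY f hf t ht h₁ h₂ h₃ h₄

end ARShapes
end

section
/- Let f : X → Y be an irreducible morphism in C_I(P) between minimal projective complexes. If there exists t > 0 such that Y^j = 0 for all j < -t and for all j > 0, X^{-(t+1)} ≠ 0, and X^1 ≠ 0, then f is sepic. -/
/-! Statement 3: Lemma 1(c) of the paper. -/

open CategoryTheory CategoryTheory.Limits

namespace ARShapes

variable {Λ : Type} [Ring Λ]

/-! ### Auxiliary material for the proof -/

lemma aux_subsingleton_of_isZero (M : ModuleCat Λᵐᵒᵖ) (h : IsZero M) : Subsingleton M := by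
  have h0 : (𝟙 M : M ⟶ M) = 0 := h.eq_of_src _ _
  constructor; intro a b
  calc a = (𝟙 M : M ⟶ M) a := rfl
    _ = (0 : M ⟶ M) a := by rw [h0]
    _ = (𝟙 M : M ⟶ M) b := by rw [h0]; rfl
    _ = b := rfl

lemma aux_isSplitEpi_of_isZero {M N : ModuleCat Λᵐᵒᵖ} (φ : M ⟶ N) (h : IsZero N) :
    IsSplitEpi φ := ⟨⟨⟨0, h.eq_of_src _ _⟩⟩⟩

lemma aux_not_isSplitMono {M N : ModuleCat Λᵐᵒᵖ} (φ : M ⟶ N) (hN : IsZero N)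
    (hM : ¬ IsZero M) : ¬ IsSplitMono φ := by
  intro h
  obtain ⟨⟨r, hr⟩⟩ := h
  apply hM
  rw [IsZero.iff_id_eq_zero, ← hr, hN.eq_of_tgt φ 0, zero_comp]

lemma aux_range_le_of_eqToHom {A A' B B' : ModuleCat Λᵐᵒᵖ} (e₁ : A' = A) (e₂ : B = B')
    (d : A ⟶ B) (J : Ideal Λᵐᵒᵖ)
    (h : LinearMap.range d.hom ≤ J • (⊤ : Submodule Λᵐᵒᵖ B)) :
    LinearMap.range (eqToHom e₁ ≫ d ≫ eqToHom e₂).hom ≤ J • (⊤ : Submodule Λᵐᵒᵖ B') := by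
  subst e₁; subst e₂; simpa using h

/-- Degrees of the gluing complex: `X` in degrees `≤ 0`, `Y` above. -/
def ZXf (X Y : Cplx Λ) : ℤ → ModuleCat Λᵐᵒᵖ := fun j => if j ≤ 0 then X.X j else Y.X j

lemma ZXf_le {X Y : Cplx Λ} {j : ℤ} (h : j ≤ 0) : ZXf X Y j = X.X j := if_pos h
lemma ZXf_gt {X Y : Cplx Λ} {j : ℤ} (h : ¬ j ≤ 0) : ZXf X Y j = Y.X j := if_neg h
def Zdf (X Y : Cplx Λ) (f : X ⟶ Y) (i : ℤ) : ZXf X Y i ⟶ ZXf X Y (i + 1) :=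
  if h : i + 1 ≤ 0 then
    eqToHom (ZXf_le (by omega)) ≫ X.d i (i + 1) ≫ eqToHom (ZXf_le h).symm
  else if h' : i ≤ 0 then
    eqToHom (ZXf_le h') ≫ X.d i (i + 1) ≫ f.f (i + 1) ≫ eqToHom (ZXf_gt h).symm
  else
    eqToHom (ZXf_gt h') ≫ Y.d i (i + 1) ≫ eqToHom (ZXf_gt h).symm
lemma Zdf_sq (X Y : Cplx Λ) (f : X ⟶ Y) (i : ℤ) :
    Zdf X Y f i ≫ Zdf X Y f (i + 1) = 0 := by
  unfold Zdf
  by_cases h2 : i + 1 + 1 ≤ 0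
  · have h1 : i + 1 ≤ 0 := by omega
    rw [dif_pos h1, dif_pos h2]
    simp
  · by_cases h1 : i + 1 ≤ 0
    · rw [dif_pos h1, dif_neg h2, dif_pos h1]
      simp
    · rw [dif_neg h1, dif_neg h2, dif_neg h1]
      by_cases h0 : i ≤ 0
      · rw [dif_pos h0]
        simp only [Category.assoc, eqToHom_trans_assoc, eqToHom_refl, Category.id_comp]
        rw [f.comm_assoc]
        simp
      · rw [dif_neg h0]
        simp
abbrev Zc (X Y : Cplx Λ) (f : X ⟶ Y) : Cplx Λ :=
  CochainComplex.of (ZXf X Y) (Zdf X Y f) (Zdf_sq X Y f)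
lemma Zc_d (X Y : Cplx Λ) (f : X ⟶ Y) (i : ℤ) :
    (Zc X Y f).d i (i + 1) = Zdf X Y f i := CochainComplex.of_d _ _ i

def gZ (X Y : Cplx Λ) (f : X ⟶ Y) : X ⟶ Zc X Y f where
  f j := if h : j ≤ 0 then eqToHom (ZXf_le h).symm else f.f j ≫ eqToHom (ZXf_gt h).symm
  comm' i j hij := by
    obtain rfl : i + 1 = j := hij
    rw [Zc_d]
    beta_reduce
    unfold Zdf
    by_cases h1 : i + 1 ≤ 0
    · have h0 : i ≤ 0 := by omega
      rw [dif_pos h1, dif_pos h0, dif_pos h1]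
      simp
    · by_cases h0 : i ≤ 0
      · rw [dif_neg h1, dif_pos h0, dif_pos h0, dif_neg h1]
        simp
      · rw [dif_neg h1, dif_neg h0, dif_neg h0, dif_neg h1]
        simp only [Category.assoc, eqToHom_trans_assoc, eqToHom_refl, Category.id_comp] <;>
          (rw [← f.comm_assoc]; try simp)

def hZ (X Y : Cplx Λ) (f : X ⟶ Y) : Zc X Y f ⟶ Y where
  f j := if h : j ≤ 0 then eqToHom (ZXf_le h) ≫ f.f j else eqToHom (ZXf_gt h)
  comm' i j hij := by
    obtain rfl : i + 1 = j := hij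
    rw [Zc_d]
    beta_reduce
    unfold Zdf
    by_cases h1 : i + 1 ≤ 0
    · have h0 : i ≤ 0 := by omega
      rw [dif_pos h1, dif_pos h0, dif_pos h1]
      simp [f.comm]
    · by_cases h0 : i ≤ 0
      · rw [dif_neg h1, dif_pos h0, dif_pos h0, dif_neg h1]
        simp [f.comm]
      · rw [dif_neg h1, dif_neg h0, dif_neg h0, dif_neg h1]
        simp

lemma gh_eq (X Y : Cplx Λ) (f : X ⟶ Y) : f = gZ X Y f ≫ hZ X Y f := by
  ext j
  simp only [HomologicalComplex.comp_f, gZ, hZ]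
  by_cases h : j ≤ 0
  · rw [dif_pos h, dif_pos h]; simp
  · rw [dif_neg h, dif_neg h]; simp

lemma gZ_f (X Y : Cplx Λ) (f : X ⟶ Y) (j : ℤ) :
    (gZ X Y f).f j =
      if h : j ≤ 0 then eqToHom (ZXf_le h).symm else f.f j ≫ eqToHom (ZXf_gt h).symm := rfl

lemma hZ_f (X Y : Cplx Λ) (f : X ⟶ Y) (j : ℤ) :
    (hZ X Y f).f j =
      if h : j ≤ 0 then eqToHom (ZXf_le h) ≫ f.f j else eqToHom (ZXf_gt h) := rfl

lemma Zc_min (X Y : Cplx Λ) (f : X ⟶ Y) (hX : IsMinimalProjective X)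
    (hz : ∀ j : ℤ, ¬ j ≤ 0 → IsZero (Y.X j)) : IsMinimalProjective (Zc X Y f) := by
  refine ⟨fun i => ?_, fun i => ?_, fun i => ?_⟩
  · show Module.Finite Λᵐᵒᵖ (ZXf X Y i)
    by_cases h : i ≤ 0
    · rw [ZXf_le (X := X) (Y := Y) h]; exact hX.1 i
    · have : Subsingleton (ZXf X Y i) := by
        rw [ZXf_gt (X := X) (Y := Y) h]
        exact aux_subsingleton_of_isZero _ (hz i h)
      exact ⟨Subsingleton.elim (⊤ : Submodule Λᵐᵒᵖ (ZXf X Y i)) ⊥ ▸ Submodule.fg_bot⟩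
  · show Module.Projective Λᵐᵒᵖ (ZXf X Y i)
    by_cases h : i ≤ 0
    · rw [ZXf_le (X := X) (Y := Y) h]; exact hX.2.1 i
    · have : Subsingleton (ZXf X Y i) := by
        rw [ZXf_gt (X := X) (Y := Y) h]
        exact aux_subsingleton_of_isZero _ (hz i h)
      exact Module.Projective.of_basis (Module.Basis.empty (ι := Empty) (ZXf X Y i))
  · show LinearMap.range ((Zc X Y f).d i (i + 1)).hom ≤ _
    rw [Zc_d]
    by_cases h1 : i + 1 ≤ 0
    · unfold Zdf
      rw [dif_pos h1]
      exact aux_range_le_of_eqToHom _ _ _ _ (hX.2.2 i)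
    · have : Subsingleton (ZXf X Y (i + 1)) := by
        rw [ZXf_gt (X := X) (Y := Y) h1]
        exact aux_subsingleton_of_isZero _ (hz _ h1)
      intro x _
      have hx : x = 0 := @Subsingleton.elim _ this _ _
      rw [hx]
      exact Submodule.zero_mem _

/-- If `f : X ⟶ Y` is irreducible in `C_I(P)`, `Y` vanishes in degrees
`< -t` (for some `t > 0`) and in positive degrees, `X^{-(t+1)} ≠ 0` and `X^1 ≠ 0`, then `f`
is sepic. -/
theorem sepic_of_irreducible
    {k Λ : Type} [Field k] [Ring Λ] [Algebra k Λ] [FiniteDimensional k Λ]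
    (X Y : Cplx Λ) (hX : IsMinimalProjective X) (hY : IsMinimalProjective Y)
    (f : X ⟶ Y) (hf : IrreducibleC f) (t : ℤ) (ht : 0 < t)
    (h₁ : ∀ j : ℤ, j < -t → IsZero (Y.X j))
    (h₂ : ∀ j : ℤ, 0 < j → IsZero (Y.X j))
    (h₃ : ¬ IsZero (X.X (-(t + 1))))
    (h₄ : ¬ IsZero (X.X 1)) :
    Sepic f := by
  -- Factor `f` through the gluing complex `Z` and use irreducibility.
  have hmin : IsMinimalProjective (Zc X Y f) :=
    Zc_min X Y f hX fun j hj => h₂ j (by omega)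
  have h10 : ¬ (1 : ℤ) ≤ 0 := by omega
  rcases hf.2.2 (Zc X Y f) hmin (gZ X Y f) (hZ X Y f) (gh_eq X Y f) with hg | hh
  · -- the first factor cannot be a split mono, since `f.f 1` would then be one
    exfalso
    obtain ⟨⟨r, hr⟩⟩ := hg
    have hr1 : (gZ X Y f).f 1 ≫ r.f 1 = 𝟙 (X.X 1) := by
      have := congrArg (fun φ => HomologicalComplex.Hom.f φ 1) hr
      simpa using this
    rw [gZ_f, dif_neg h10, Category.assoc] at hr1
    have : IsSplitMono (f.f 1) := ⟨⟨⟨eqToHom (ZXf_gt h10).symm ≫ r.f 1, hr1⟩⟩⟩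
    exact aux_not_isSplitMono (f.f 1) (h₂ 1 one_pos) h₄ this
  · -- the second factor being a split epi makes `f` sepic
    obtain ⟨⟨s, hs⟩⟩ := hh
    intro i
    by_cases h : i ≤ 0
    · have hs1 : s.f i ≫ (hZ X Y f).f i = 𝟙 (Y.X i) := by
        have := congrArg (fun φ => HomologicalComplex.Hom.f φ i) hs
        simpa using this
      rw [hZ_f, dif_pos h] at hs1
      exact ⟨⟨⟨s.f i ≫ eqToHom (ZXf_le h), by rw [Category.assoc]; exact hs1⟩⟩⟩
    · exact aux_isSplitEpi_of_isZero _ (h₂ i (by omega))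

end ARShapes
end

section
/- Let f : X → Y and g : X' → Y' be chain maps in C_I(P) between minimal projective complexes such that f and g are isomorphic in the homotopy category K_I(P), i.e., there exist isomorphisms φ : X → X' and ψ : Y → Y' in K_I(P) with ψ∘[f] = [g]∘φ. If f is smonic, then g is smonic. -/
/-! Statement 7: Lemma 2 of the paper. -/

open CategoryTheory CategoryTheory.Limits

namespace ARShapesAux


variable {R : Type} [Ring R]

lemma exists_left_inv {r : R} (h : r - 1 ∈ Ideal.jacobson (⊥ : Ideal R)) :
    ∃ s : R, s * r = 1 ∧ s - 1 ∈ Ideal.jacobson (⊥ : Ideal R) := by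
  obtain ⟨s, hs⟩ := Ideal.exists_mul_sub_mem_of_sub_one_mem_jacobson r h
  rw [Ideal.mem_bot, sub_eq_zero] at hs
  refine ⟨s, hs, ?_⟩
  have key : s - 1 = -(s * (r - 1)) := by
    rw [mul_sub, mul_one, hs, neg_sub]
  rw [key]
  exact neg_mem (Ideal.mul_mem_left _ s h)

lemma isUnit_one_sub_of_mem {x : R} (hx : x ∈ Ideal.jacobson (⊥ : Ideal R)) :
    IsUnit (1 - x) := by
  obtain ⟨s, hsr, hs⟩ := exists_left_inv (r := 1 - x) (by simpa using neg_mem hx)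
  obtain ⟨t, hts, -⟩ := exists_left_inv hs
  have ht : t = 1 - x := by
    calc t = t * (s * (1 - x)) := by rw [hsr, mul_one]
    _ = (t * s) * (1 - x) := by rw [mul_assoc]
    _ = 1 - x := by rw [hts, one_mul]
  exact ⟨⟨1 - x, s, by rw [← ht]; exact hts, hsr⟩, rfl⟩

lemma mul_mem_jacobson {x : R} (y : R) (hx : x ∈ Ideal.jacobson (⊥ : Ideal R)) :
    x * y ∈ Ideal.jacobson (⊥ : Ideal R) := by
  refine Ideal.mem_sInf.mpr ?_
  rintro m ⟨-, hm⟩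
  by_cases hy : y ∈ m
  · exact m.smul_mem x hy
  · set ρ : R →ₗ[R] R ⧸ m := (Submodule.mkQ m).comp (LinearMap.toSpanSingleton R R y) with hρ
    have hρ_apply : ∀ r : R, ρ r = Submodule.Quotient.mk (r * y) := fun r => rfl
    have hmax : Ideal.IsMaximal (LinearMap.ker ρ : Ideal R) := by
      rw [Ideal.isMaximal_def]
      constructor
      · intro htop
        have h1 : (1 : R) ∈ LinearMap.ker ρ := htop ▸ Submodule.mem_top
        rw [LinearMap.mem_ker, hρ_apply, one_mul, Submodule.Quotient.mk_eq_zero] at h1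
        exact hy h1
      · intro I hI
        haveI : IsSimpleModule R (R ⧸ m) :=
          isSimpleModule_iff_isCoatom.mpr (Ideal.isMaximal_def.mp hm)
        have hne : Submodule.map ρ I ≠ ⊥ := by
          obtain ⟨r₀, hr₀I, hr₀⟩ := SetLike.exists_of_lt hI
          intro hb
          have : ρ r₀ ∈ Submodule.map ρ I := Submodule.mem_map_of_mem hr₀I
          rw [hb, Submodule.mem_bot] at this
          exact hr₀ (LinearMap.mem_ker.mpr this)
        have htop : Submodule.map ρ I = ⊤ := (eq_bot_or_eq_top _).resolve_left hne
        have hmem : (Submodule.Quotient.mk y : R ⧸ m) ∈ Submodule.map ρ I := htop ▸ Submodule.mem_top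
        obtain ⟨r, hrI, hr⟩ := hmem
        have : r - 1 ∈ LinearMap.ker ρ := by
          rw [LinearMap.mem_ker, hρ_apply, Submodule.Quotient.mk_eq_zero, sub_mul, one_mul]
          rw [hρ_apply] at hr
          exact (Submodule.Quotient.eq m).mp hr
        have h1 : (1 : R) ∈ I := by
          have := I.sub_mem hrI (hI.le this)
          simpa using this
        exact Ideal.eq_top_of_isUnit_mem I h1 isUnit_one
    have hx' : x ∈ LinearMap.ker ρ := Ideal.mem_sInf.mp hx ⟨bot_le, hmax⟩
    rw [LinearMap.mem_ker, hρ_apply, Submodule.Quotient.mk_eq_zero] at hx'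
    exact hx'

lemma smul_smul_assoc (I A : Ideal R) {M : Type*} [AddCommGroup M] [Module R M]
    (N : Submodule R M) : (I • A) • N = I • (A • N) := by
  apply le_antisymm
  · rw [Submodule.smul_le]
    intro x hx n hn
    refine Submodule.smul_induction_on hx (fun r hr a ha => ?_) (fun y z hy hz => ?_)
    · rw [smul_eq_mul, mul_smul]
      exact Submodule.smul_mem_smul hr (Submodule.smul_mem_smul ha hn)
    · rw [add_smul]; exact add_mem hy hz
  · rw [Submodule.smul_le]
    intro r hr z hz
    refine Submodule.smul_induction_on hz (fun a ha n hn => ?_) (fun y z hy hz => ?_)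
    · rw [← mul_smul, ← smul_eq_mul]
      exact Submodule.smul_mem_smul (Submodule.smul_mem_smul hr ha) hn
    · rw [smul_add]; exact add_mem hy hz

/-- Iterated smul powers of the Jacobson radical. -/
def jpow (R : Type) [Ring R] : ℕ → Ideal R
  | 0 => ⊤
  | m + 1 => Ideal.jacobson (⊥ : Ideal R) • jpow R m

lemma jpow_succ_le (m : ℕ) : jpow R (m + 1) ≤ jpow R m := by
  induction m with
  | zero => exact le_top
  | succ m ih => exact smul_mono_right _ ih

lemma jpow_antitone : Antitone (jpow R) :=
  antitone_nat_of_succ_le jpow_succ_le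

lemma jpow_mul (a b : ℕ) : jpow R a • jpow R b = jpow R (a + b) := by
  induction a with
  | zero => rw [jpow, Submodule.top_smul, Nat.zero_add]
  | succ a ih =>
      rw [jpow, smul_smul_assoc, ih, Nat.succ_add, jpow]

lemma jpow_one_le : jpow R 1 ≤ Ideal.jacobson (⊥ : Ideal R) := by
  rw [jpow]
  refine Submodule.smul_le.mpr fun r hr x _ => ?_
  rw [smul_eq_mul]
  exact mul_mem_jacobson x hr

lemma exists_jpow_eq_bot [IsArtinianRing R] : ∃ n : ℕ, jpow R n = ⊥ := by
  obtain ⟨n, hn⟩ := IsArtinian.monotone_stabilizes (R := R) (M := R)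
    ⟨fun m => OrderDual.toDual (jpow R m), fun a b h => jpow_antitone h⟩
  refine ⟨n + 1, ?_⟩
  set I := jpow R (n + 1) with hI
  have hIJ : I ≤ Ideal.jacobson (⊥ : Ideal R) :=
    le_trans (jpow_antitone (by omega : 1 ≤ n + 1)) jpow_one_le
  have hstab : ∀ m, n ≤ m → jpow R n = jpow R m := fun m h => hn m h
  have hII : I • I = I := by
    rw [hI, jpow_mul, ← hstab (n + 1 + (n + 1)) (by omega), hstab (n + 1) (by omega)]
  by_contra hbot
  obtain ⟨A, hA, hAmin⟩ := IsArtinian.set_has_minimal (R := R) (M := R)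
    {A : Ideal R | I • A ≠ ⊥} ⟨I, show I • I ≠ ⊥ by rw [hII]; exact hbot⟩
  have hex : ∃ a ∈ A, I • Submodule.span R {a} ≠ ⊥ := by
    by_contra h
    push_neg at h
    refine hA (le_bot_iff.mp (Submodule.smul_le.mpr fun r hr x hx => ?_))
    rw [← h x hx]
    exact Submodule.smul_mem_smul hr (Submodule.mem_span_singleton_self x)
  obtain ⟨a, haA, ha⟩ := hex
  set B := I • Submodule.span R {a} with hB
  have hBA : B ≤ A := Submodule.smul_le.mpr fun r hr x hx =>
    A.smul_mem r (Submodule.span_le.mpr (by simpa using haA) hx)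
  have hBS : I • B ≠ ⊥ := by rw [hB, ← smul_smul_assoc, hII]; exact ha
  have hBeq : B = A := by
    by_contra hne
    exact hAmin B hBS (lt_of_le_of_ne hBA hne)
  have haB : a ∈ B := hBeq ▸ haA
  have hta : ∃ t ∈ Ideal.jacobson (⊥ : Ideal R), t • a = a := by
    have key : ∀ x ∈ B, ∃ t ∈ Ideal.jacobson (⊥ : Ideal R), t • a = x := by
      intro x hx
      refine Submodule.smul_induction_on hx (fun r hr y hy => ?_) (fun y z hy hz => ?_)
      · obtain ⟨c, rfl⟩ := Submodule.mem_span_singleton.mp hy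
        exact ⟨r * c, mul_mem_jacobson c (hIJ hr), by rw [mul_smul]⟩
      · obtain ⟨t₁, h₁, e₁⟩ := hy
        obtain ⟨t₂, h₂, e₂⟩ := hz
        exact ⟨t₁ + t₂, add_mem h₁ h₂, by rw [add_smul, e₁, e₂]⟩
    exact key a haB
  obtain ⟨t, ht, hta⟩ := hta
  obtain ⟨u, hu⟩ := isUnit_one_sub_of_mem ht
  have h0 : (1 - t) • a = 0 := by rw [sub_smul, one_smul, hta, sub_self]
  have ha0 : a = 0 := by
    calc a = ((↑u⁻¹ : R) * (1 - t)) • a := by rw [← hu, u.inv_mul, one_smul]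
    _ = (↑u⁻¹ : R) • ((1 - t) • a) := by rw [mul_smul]
    _ = 0 := by rw [h0, smul_zero]
  apply ha
  rw [hB, ha0, Submodule.span_zero_singleton, Submodule.smul_bot]


lemma apply_mem_smul_top {M N : Type*} [AddCommGroup M] [Module R M] [AddCommGroup N]
    [Module R N] (f : M →ₗ[R] N) (I : Ideal R) {x : M} (hx : x ∈ I • (⊤ : Submodule R M)) :
    f x ∈ I • (⊤ : Submodule R N) := by
  refine Submodule.smul_induction_on hx (fun r hr m _ => ?_) (fun y z hy hz => ?_)
  · rw [map_smul]
    exact Submodule.smul_mem_smul hr Submodule.mem_top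
  · rw [map_add]; exact add_mem hy hz

lemma map_smul_le {M N : Type*} [AddCommGroup M] [Module R M] [AddCommGroup N] [Module R N]
    (f : M →ₗ[R] N) (I : Ideal R) (P : Submodule R M) : (I • P).map f ≤ I • P.map f :=
  Submodule.map_le_iff_le_comap.mpr (Submodule.smul_le.mpr fun r hr x hx => by
    refine Submodule.mem_comap.mpr ?_
    rw [map_smul]
    exact Submodule.smul_mem_smul hr (Submodule.mem_map_of_mem hx))

lemma isNilpotent_of_range_le [IsArtinianRing R] {M : Type*} [AddCommGroup M] [Module R M]
    (D : Module.End R M)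
    (hD : LinearMap.range D ≤ Ideal.jacobson (⊥ : Ideal R) • (⊤ : Submodule R M)) :
    IsNilpotent D := by
  obtain ⟨n, hn⟩ := exists_jpow_eq_bot (R := R)
  refine ⟨n, ?_⟩
  have key : ∀ m : ℕ, LinearMap.range (D ^ m) ≤ jpow R m • (⊤ : Submodule R M) := by
    intro m
    induction m with
    | zero => rw [jpow, Submodule.top_smul]; exact le_top
    | succ m ih =>
        calc LinearMap.range (D ^ (m + 1))
            = (LinearMap.range D).map (D ^ m) := by
              rw [pow_succ, Module.End.mul_eq_comp, LinearMap.range_comp]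
          _ ≤ (Ideal.jacobson (⊥ : Ideal R) • (⊤ : Submodule R M)).map (D ^ m) :=
              Submodule.map_mono hD
          _ ≤ Ideal.jacobson (⊥ : Ideal R) • (⊤ : Submodule R M).map (D ^ m) :=
              map_smul_le _ _ _
          _ = Ideal.jacobson (⊥ : Ideal R) • LinearMap.range (D ^ m) := by
              rw [Submodule.map_top]
          _ ≤ Ideal.jacobson (⊥ : Ideal R) • (jpow R m • (⊤ : Submodule R M)) :=
              smul_mono_right _ ih
          _ = jpow R (m + 1) • (⊤ : Submodule R M) := by
              rw [jpow, smul_smul_assoc]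
  have h := key n
  rw [hn, Submodule.bot_smul] at h
  exact LinearMap.ext fun x => by simpa using h (LinearMap.mem_range_self _ x)

/-- If `e : M ⟶ M` differs from the identity by a morphism with range in `rad M`,
then `e` is an isomorphism. -/
lemma isIso_of_sub_id_range [IsArtinianRing R] {M : ModuleCat R} (e : M ⟶ M)
    (h : LinearMap.range (e - 𝟙 M).hom ≤
      Ideal.jacobson (⊥ : Ideal R) • (⊤ : Submodule R M.carrier)) :
    IsIso e := by
  have hD : LinearMap.range ((1 : Module.End R M.carrier) - e.hom) ≤
      Ideal.jacobson (⊥ : Ideal R) • (⊤ : Submodule R M.carrier) := by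
    rintro x ⟨y, rfl⟩
    have h1 : ((1 : Module.End R M.carrier) - e.hom) y = -((e - 𝟙 M).hom y) := by
      show y - e.hom y = -(e.hom y - y)
      rw [neg_sub]
    rw [h1]
    exact neg_mem (h (LinearMap.mem_range_self _ y))
  have hnil : IsNilpotent ((1 : Module.End R M.carrier) - e.hom) :=
    isNilpotent_of_range_le _ hD
  have hu : IsUnit (show Module.End R M.carrier from e.hom) := by
    have h2 := hnil.isUnit_one_sub
    rwa [sub_sub_cancel] at h2
  obtain ⟨u, hu⟩ := hu
  replace hu : (↑u : Module.End R M.carrier) = e.hom := hu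
  refine ⟨ModuleCat.ofHom (↑u⁻¹ : Module.End R M.carrier), ?_, ?_⟩
  · apply ModuleCat.hom_ext
    show ((↑u⁻¹ : Module.End R M.carrier).comp e.hom) = LinearMap.id
    rw [← Module.End.mul_eq_comp, ← hu, u.inv_mul]
    rfl
  · apply ModuleCat.hom_ext
    show (LinearMap.comp e.hom (↑u⁻¹ : Module.End R M.carrier)) = LinearMap.id
    rw [← Module.End.mul_eq_comp, ← hu, u.mul_inv]
    rfl

lemma isIso_id_add [IsArtinianRing R] {M : ModuleCat R} (c : M ⟶ M)
    (h : LinearMap.range c.hom ≤ Ideal.jacobson (⊥ : Ideal R) • (⊤ : Submodule R M.carrier)) :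
    IsIso (𝟙 M + c) := by
  refine isIso_of_sub_id_range _ ?_
  have heq : (𝟙 M + c) - 𝟙 M = c := by abel
  rwa [heq]

end ARShapesAux

namespace ARShapes

variable {Λ : Type} [Ring Λ]

/-- The quotient functor from minimal projective complexes to the homotopy category
`K_I(P)` (realized inside the homotopy category of all complexes, of which `K_I(P)` is a
full subcategory, so that isomorphisms between minimal projective complexes in `K_I(P)`
are the same as in the ambient homotopy category). -/
noncomputable abbrev Q (Λ : Type) [Ring Λ] :
    Cplx Λ ⥤ HomotopyCategory (ModuleCat Λᵐᵒᵖ) (ComplexShape.up ℤ) :=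
  HomotopyCategory.quotient (ModuleCat Λᵐᵒᵖ) (ComplexShape.up ℤ)


section ChainAux

open ARShapesAux

lemma d_range_le {X : Cplx Λ} (hX : IsMinimalProjective X) (j l : ℤ) :
    LinearMap.range (X.d j l).hom ≤
      Ideal.jacobson (⊥ : Ideal Λᵐᵒᵖ) • (⊤ : Submodule Λᵐᵒᵖ (X.X l)) := by
  by_cases h : j + 1 = l
  · subst h
    exact hX.2.2 j
  · rw [X.shape j l h]
    rintro x ⟨y, rfl⟩
    have h0 : (0 : X.X j ⟶ X.X l).hom y = 0 := rfl
    rw [h0]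
    exact zero_mem _

lemma homotopy_sub_range {X Y : Cplx Λ} (hX : IsMinimalProjective X)
    (hY : IsMinimalProjective Y) {p q : X ⟶ Y} (H : Homotopy p q) (i : ℤ) :
    LinearMap.range (p.f i - q.f i).hom ≤
      Ideal.jacobson (⊥ : Ideal Λᵐᵒᵖ) • (⊤ : Submodule Λᵐᵒᵖ (Y.X i)) := by
  have hd : p.f i - q.f i = dNext i H.hom + prevD i H.hom := by
    rw [H.comm i]; abel
  rw [hd]
  rintro x ⟨y, rfl⟩
  have h1 : (dNext i H.hom + prevD i H.hom).hom y = (dNext i H.hom).hom y + (prevD i H.hom).hom y := rfl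
  rw [h1]
  refine add_mem ?_ ?_
  · have h2 : dNext i H.hom = X.d i (i + 1) ≫ H.hom (i + 1) i :=
      dNext_eq H.hom (by simp)
    have h3 : (dNext i H.hom).hom y = (H.hom (i + 1) i).hom ((X.d i (i + 1)).hom y) := by rw [h2]; rfl
    rw [h3]
    exact apply_mem_smul_top (H.hom (i + 1) i).hom _ (hX.2.2 i (LinearMap.mem_range_self _ y))
  · have h2 : prevD i H.hom = H.hom i (i - 1) ≫ Y.d (i - 1) i :=
      prevD_eq H.hom (by simp)
    have h3 : (prevD i H.hom).hom y = (Y.d (i - 1) i).hom ((H.hom i (i - 1)).hom y) := by rw [h2]; rfl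
    rw [h3]
    exact d_range_le hY (i - 1) i (LinearMap.mem_range_self _ _)

end ChainAux

/-- If chain maps `f` and `g` between minimal projective complexes are isomorphic in the homotopy category `K_I(P)` and `f` is smonic, then `g` is smonic. -/
theorem smonic_of_iso
    {k Λ : Type} [Field k] [Ring Λ] [Algebra k Λ] [FiniteDimensional k Λ]
    (X Y X' Y' : Cplx Λ)
    (hX : IsMinimalProjective X) (hY : IsMinimalProjective Y)
    (hX' : IsMinimalProjective X') (hY' : IsMinimalProjective Y')
    (f : X ⟶ Y) (g : X' ⟶ Y')
    (φ : (Q Λ).obj X ≅ (Q Λ).obj X') (ψ : (Q Λ).obj Y ≅ (Q Λ).obj Y')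
    (hcomm : (Q Λ).map f ≫ ψ.hom = φ.hom ≫ (Q Λ).map g)
    (hf : Smonic f) :
    Smonic g := by
  classical
  haveI : Module.Finite k Λᵐᵒᵖ := Module.Finite.equiv (MulOpposite.opLinearEquiv k)
  haveI hart : IsArtinianRing Λᵐᵒᵖ := isArtinian_of_tower k inferInstance
  obtain ⟨u, hu⟩ := (Q Λ).map_surjective φ.hom
  obtain ⟨u', hu'⟩ := (Q Λ).map_surjective φ.inv
  obtain ⟨w, hw⟩ := (Q Λ).map_surjective ψ.hom
  obtain ⟨w', hw'⟩ := (Q Λ).map_surjective ψ.inv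
  have h1 : Homotopy (u' ≫ u) (𝟙 X') := HomotopyCategory.homotopyOfEq _ _ (by
    rw [Functor.map_comp, hu, hu', φ.inv_hom_id, CategoryTheory.Functor.map_id])
  have h2 : Homotopy (w ≫ w') (𝟙 Y) := HomotopyCategory.homotopyOfEq _ _ (by
    rw [Functor.map_comp, hw, hw', ψ.hom_inv_id, CategoryTheory.Functor.map_id])
  have h3 : Homotopy (u ≫ g) (f ≫ w) := HomotopyCategory.homotopyOfEq _ _ (by
    rw [Functor.map_comp, Functor.map_comp, hu, hw, ← hcomm])
  intro i
  -- `u.f i` is a split epimorphism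
  have hiso1 : IsIso ((u' ≫ u).f i) := by
    apply ARShapesAux.isIso_of_sub_id_range
    have := homotopy_sub_range hX' hX' h1 i
    simpa using this
  have hepi : IsSplitEpi (u.f i) := by
    refine ⟨⟨⟨inv ((u' ≫ u).f i) ≫ u'.f i, ?_⟩⟩⟩
    rw [Category.assoc, ← HomologicalComplex.comp_f, IsIso.inv_hom_id]
  haveI : Epi (u.f i) := hepi.epi
  -- `w.f i` is a split monomorphism
  have hiso2 : IsIso ((w ≫ w').f i) := by
    apply ARShapesAux.isIso_of_sub_id_range
    have := homotopy_sub_range hY hY h2 i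
    simpa using this
  have hmono_w : IsSplitMono (w.f i) := by
    refine ⟨⟨⟨w'.f i ≫ inv ((w ≫ w').f i), ?_⟩⟩⟩
    rw [← Category.assoc, ← HomologicalComplex.comp_f, IsIso.hom_inv_id]
  haveI := hmono_w
  haveI : IsSplitMono (f.f i) := hf i
  -- `(f ≫ w).f i` is a split monomorphism
  set m : X.X i ⟶ Y'.X i := f.f i ≫ w.f i with hm
  haveI hmsm : IsSplitMono m := by
    refine ⟨⟨⟨retraction (w.f i) ≫ retraction (f.f i), ?_⟩⟩⟩
    rw [hm, Category.assoc, ← Category.assoc (w.f i), IsSplitMono.id, Category.id_comp,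
      IsSplitMono.id]
  set a : X.X i ⟶ Y'.X i := (u ≫ g).f i with ha
  have hD : LinearMap.range (a - m).hom ≤
      Ideal.jacobson (⊥ : Ideal Λᵐᵒᵖ) • (⊤ : Submodule Λᵐᵒᵖ (Y'.X i)) := by
    have := homotopy_sub_range hX hY' h3 i
    rw [ha, hm, ← HomologicalComplex.comp_f]
    exact this
  set t : Y'.X i ⟶ X.X i := retraction m with htdef
  have key : a ≫ t = 𝟙 (X.X i) + (a - m) ≫ t := by
    rw [Preadditive.sub_comp, htdef, IsSplitMono.id]
    abel
  have hiso3 : IsIso (𝟙 (X.X i) + (a - m) ≫ t) := by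
    apply ARShapesAux.isIso_id_add
    rintro x ⟨y, rfl⟩
    have h4 : ((a - m) ≫ t).hom y = t.hom ((a - m).hom y) := rfl
    rw [h4]
    exact ARShapesAux.apply_mem_smul_top t.hom _ (hD (LinearMap.mem_range_self _ y))
  have hamono : IsSplitMono a := by
    refine ⟨⟨⟨t ≫ inv (𝟙 (X.X i) + (a - m) ≫ t), ?_⟩⟩⟩
    rw [← Category.assoc, key, IsIso.hom_inv_id]
  haveI := hamono
  -- conclude
  have hc2 : u.f i ≫ g.f i = a := (HomologicalComplex.comp_f u g i).symm
  refine ⟨⟨⟨retraction a ≫ u.f i, ?_⟩⟩⟩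
  rw [← cancel_epi (u.f i), Category.comp_id, ← Category.assoc, ← Category.assoc, hc2,
    IsSplitMono.id, Category.id_comp]


end ARShapes
end

section
/- Let f : X → Y and g : X' → Y' be chain maps in C_I(P) between minimal projective complexes such that f and g are isomorphic in the homotopy category K_I(P), i.e., there exist isomorphisms φ : X → X' and ψ : Y → Y' in K_I(P) with ψ∘[f] = [g]∘φ. If f is sepic, then g is sepic. -/
/-! Statement 8: Lemma 2 of the paper. -/

open CategoryTheory CategoryTheory.Limits

namespace ARShapes

variable {Λ : Type} [Ring Λ]

section Aux

variable {Λ : Type} [Ring Λ]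

private lemma mem_smul_top_map {R : Type*} [Ring R] {M N : Type*} [AddCommGroup M]
    [AddCommGroup N] [Module R M] [Module R N] (f : M →ₗ[R] N) {J : Ideal R} {x : M}
    (hx : x ∈ J • (⊤ : Submodule R M)) : f x ∈ J • (⊤ : Submodule R N) := by
  have h1 : Submodule.map f (J • (⊤ : Submodule R M)) = J • Submodule.map f ⊤ :=
    Submodule.map_smul'' J ⊤ f
  have hmem : f x ∈ Submodule.map f (J • (⊤ : Submodule R M)) := Submodule.mem_map_of_mem hx
  rw [h1] at hmem
  exact Submodule.smul_mono (le_refl J) le_top hmem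

private lemma bot_mul_mem_right {R : Type*} [Ring R] {x y : R} (hx : x ∈ (⊥ : Ideal R)) :
    x * y ∈ (⊥ : Ideal R) := by
  rw [Ideal.mem_bot] at hx ⊢
  rw [hx, zero_mul]

/-- The Jacobson radical is a two-sided ideal. -/
private lemma jac_mul_mem_right {R : Type*} [Ring R] {x y : R}
    (hx : x ∈ Ideal.jacobson (⊥ : Ideal R)) : x * y ∈ Ideal.jacobson (⊥ : Ideal R) :=
  (Ideal.jacobson (⊥ : Ideal R)).mul_mem_right y hx

private lemma jac_smul_top_R {R : Type*} [Ring R] :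
    (Ideal.jacobson (⊥ : Ideal R)) • (⊤ : Submodule R R) = Ideal.jacobson (⊥ : Ideal R) := by
  apply le_antisymm
  · refine Submodule.smul_le.mpr fun c hc r _ => ?_
    exact jac_mul_mem_right hc
  · intro c hc
    simpa using Submodule.smul_mem_smul hc (Submodule.mem_top (x := (1 : R)))

/-- Nakayama's lemma over a possibly noncommutative ring. -/
private lemma nakayama_aux {R M : Type*} [Ring R] [AddCommGroup M] [Module R M]
    {N : Submodule R M}
    (h : (⊤ : Submodule R M) ≤ N ⊔ (Ideal.jacobson (⊥ : Ideal R)) • (⊤ : Submodule R M)) :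
    ∀ s : Finset M, (⊤ : Submodule R M) ≤ N ⊔ Submodule.span R (s : Set M) → N = ⊤ := by
  classical
  intro s
  induction s using Finset.induction_on with
  | empty =>
    intro hs
    simp only [Finset.coe_empty, Submodule.span_empty, sup_bot_eq] at hs
    exact top_le_iff.mp hs
  | @insert a s ha ih =>
    intro hs
    set J := Ideal.jacobson (⊥ : Ideal R) with hJdef
    set K := N ⊔ Submodule.span R (s : Set M) with hK
    set ρ := LinearMap.toSpanSingleton R M a with hρ
    have hmapρ : Submodule.map ρ ⊤ = Submodule.span R ({a} : Set M) := by
      rw [Submodule.map_top]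
      exact (LinearMap.span_singleton_eq_range R M a).symm
    have hJa : J • Submodule.span R ({a} : Set M) = Submodule.map ρ J := by
      rw [← hmapρ, ← Submodule.map_smul'', jac_smul_top_R]
    have htople : (⊤ : Submodule R M) ≤ K ⊔ Submodule.span R ({a} : Set M) := by
      refine hs.trans ?_
      rw [Finset.coe_insert, Submodule.span_insert, hK,
        sup_comm (Submodule.span R ({a} : Set M)) (Submodule.span R (s : Set M)), ← sup_assoc]
    have hJtop : J • (⊤ : Submodule R M) ≤ K ⊔ Submodule.map ρ J := by
      calc J • (⊤ : Submodule R M) ≤ J • (K ⊔ Submodule.span R ({a} : Set M)) :=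
            Submodule.smul_mono le_rfl htople
        _ = J • K ⊔ J • Submodule.span R ({a} : Set M) :=
            Submodule.smul_sup J K (Submodule.span R ({a} : Set M))
        _ ≤ K ⊔ Submodule.map ρ J := sup_le_sup Submodule.smul_le_right (le_of_eq hJa)
    have hamem : a ∈ K ⊔ Submodule.map ρ J := by
      have hle : (⊤ : Submodule R M) ≤ K ⊔ Submodule.map ρ J :=
        h.trans (sup_le ((le_sup_left : N ≤ K).trans le_sup_left) hJtop)
      exact hle Submodule.mem_top
    obtain ⟨y, hy, z, hz, hyz⟩ := Submodule.mem_sup.mp hamem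
    obtain ⟨c, hc, rfl⟩ := hz
    have hρc : ρ c = c • a := rfl
    have h1 : (1 - c) • a = y := by
      have hz' : c • a = a - y := by
        rw [← hρc, eq_sub_iff_add_eq, add_comm, hyz]
      rw [sub_smul, one_smul, hz', sub_sub_cancel]
    obtain ⟨u, hu⟩ := Ideal.exists_mul_sub_mem_of_sub_one_mem_jacobson (1 - c)
      (by simpa using J.neg_mem hc)
    rw [Ideal.mem_bot, sub_eq_zero] at hu
    have haK : a ∈ K := by
      have : a = u • ((1 - c) • a) := by rw [smul_smul, hu, one_smul]
      rw [this, h1]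
      exact K.smul_mem u hy
    refine ih (htople.trans (sup_le le_rfl ?_))
    rw [Submodule.span_singleton_le_iff_mem]
    exact haK

private lemma nakayama_top {R M : Type*} [Ring R] [AddCommGroup M] [Module R M]
    [Module.Finite R M] {N : Submodule R M}
    (h : (⊤ : Submodule R M) ≤ N ⊔ (Ideal.jacobson (⊥ : Ideal R)) • (⊤ : Submodule R M)) :
    N = ⊤ := by
  obtain ⟨s, hs⟩ := (Module.Finite.fg_top : (⊤ : Submodule R M).FG)
  exact nakayama_aux h s (by rw [hs]; exact le_sup_right)

private lemma range_d_le {W : Cplx Λ} (hW : IsMinimalProjective W) (i j : ℤ) :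
    LinearMap.range (W.d i j).hom ≤
      (Ideal.jacobson (⊥ : Ideal Λᵐᵒᵖ)) • (⊤ : Submodule Λᵐᵒᵖ (W.X j)) := by
  by_cases h : i + 1 = j
  · subst h; exact hW.2.2 i
  · rw [W.shape i j h]
    rintro x ⟨y, rfl⟩
    erw [LinearMap.zero_apply]
    exact Submodule.zero_mem _

/-- If two chain maps between minimal complexes are homotopic, their components agree
modulo the radical. -/
private lemma range_le_of_homotopy {Z W : Cplx Λ}
    (hZ : IsMinimalProjective Z) (hW : IsMinimalProjective W)
    {a b : Z ⟶ W} (h : Homotopy a b) (i : ℤ) :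
    LinearMap.range (a.f i).hom ≤ LinearMap.range (b.f i).hom ⊔
      (Ideal.jacobson (⊥ : Ideal Λᵐᵒᵖ)) • (⊤ : Submodule Λᵐᵒᵖ (W.X i)) := by
  set J := Ideal.jacobson (⊥ : Ideal Λᵐᵒᵖ) with hJdef
  rintro x ⟨z, rfl⟩
  have hc := h.comm i
  have e : a.f i z = (dNext i h.hom) z + (prevD i h.hom) z + (b.f i) z := by
    rw [hc]; rfl
  rw [e]
  have h1 : (dNext i h.hom) z ∈ J • (⊤ : Submodule Λᵐᵒᵖ (W.X i)) := by
    have hd : Z.d i ((ComplexShape.up ℤ).next i) z ∈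
        LinearMap.range (Z.d i ((ComplexShape.up ℤ).next i)).hom := ⟨z, rfl⟩
    exact mem_smul_top_map (h.hom ((ComplexShape.up ℤ).next i) i).hom
      (range_d_le hZ i _ hd)
  have h2 : (prevD i h.hom) z ∈ J • (⊤ : Submodule Λᵐᵒᵖ (W.X i)) :=
    range_d_le hW ((ComplexShape.up ℤ).prev i) i ⟨h.hom i ((ComplexShape.up ℤ).prev i) z, rfl⟩
  have h3 : (b.f i) z ∈ LinearMap.range (b.f i).hom := ⟨z, rfl⟩
  exact add_mem (add_mem (Submodule.mem_sup_right h1) (Submodule.mem_sup_right h2))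
    (Submodule.mem_sup_left h3)

end Aux

/-- If chain maps `f` and `g` between minimal projective complexes are isomorphic in the homotopy category `K_I(P)` and `f` is sepic, then `g` is sepic. -/
theorem sepic_of_iso
    {k Λ : Type} [Field k] [Ring Λ] [Algebra k Λ] [FiniteDimensional k Λ]
    (X Y X' Y' : Cplx Λ)
    (hX : IsMinimalProjective X) (hY : IsMinimalProjective Y)
    (hX' : IsMinimalProjective X') (hY' : IsMinimalProjective Y')
    (f : X ⟶ Y) (g : X' ⟶ Y')
    (φ : (Q Λ).obj X ≅ (Q Λ).obj X') (ψ : (Q Λ).obj Y ≅ (Q Λ).obj Y')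
    (hcomm : (Q Λ).map f ≫ ψ.hom = φ.hom ≫ (Q Λ).map g)
    (hf : Sepic f) :
    Sepic g := by
  classical
  set J := Ideal.jacobson (⊥ : Ideal Λᵐᵒᵖ) with hJdef
  set u : X ⟶ X' := Quot.out φ.hom with hu
  set v : Y ⟶ Y' := Quot.out ψ.hom with hv
  set w : Y' ⟶ Y := Quot.out ψ.inv with hw
  have hQv : (Q Λ).map v = ψ.hom := HomotopyCategory.quotient_map_out _
  have hQw : (Q Λ).map w = ψ.inv := HomotopyCategory.quotient_map_out _
  have hQu : (Q Λ).map u = φ.hom := HomotopyCategory.quotient_map_out _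
  -- homotopy between `w ≫ v` and the identity of `Y'`
  have hwv : Homotopy (𝟙 Y') (w ≫ v) := (HomotopyCategory.homotopyOfEq _ _ (by
    rw [Functor.map_comp, hQw, hQv, ψ.inv_hom_id, CategoryTheory.Functor.map_id])).symm
  -- homotopy between `f ≫ v` and `u ≫ g`
  have hfg : Homotopy (f ≫ v) (u ≫ g) := HomotopyCategory.homotopyOfEq _ _ (by
    rw [Functor.map_comp, Functor.map_comp, hQv, hQu, hcomm])
  -- each component of `v` is surjective
  have hvsurj : ∀ i : ℤ, Function.Surjective (v.f i) := by
    intro i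
    haveI : Module.Finite Λᵐᵒᵖ (Y'.X i) := hY'.1 i
    have hle := range_le_of_homotopy hY' hY' hwv i
    have htop : LinearMap.range ((𝟙 Y' : Y' ⟶ Y').f i).hom = ⊤ := by
      simp only [HomologicalComplex.id_f, ModuleCat.hom_id]
      exact LinearMap.range_id
    rw [htop] at hle
    have hcomp : LinearMap.range ((w ≫ v).f i).hom ≤ LinearMap.range (v.f i).hom := by
      simp only [HomologicalComplex.comp_f, ModuleCat.hom_comp]
      exact LinearMap.range_comp_le_range _ _
    have : (⊤ : Submodule Λᵐᵒᵖ (Y'.X i)) ≤ LinearMap.range (v.f i).hom ⊔ J • ⊤ :=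
      hle.trans (sup_le_sup_right hcomp _)
    exact LinearMap.range_eq_top.mp (nakayama_top this)
  intro i
  haveI : Module.Finite Λᵐᵒᵖ (Y'.X i) := hY'.1 i
  -- `f.f i` is surjective since it is a split epi
  have hfsurj : Function.Surjective (f.f i) := by
    obtain ⟨s⟩ := (hf i).exists_splitEpi
    intro y
    refine ⟨s.section_ y, ?_⟩
    have := congrArg (fun (t : Y.X i ⟶ Y.X i) => t y) s.id
    exact this
  -- hence `(f ≫ v).f i` is surjective
  have hfv : LinearMap.range ((f ≫ v).f i).hom = ⊤ := by
    rw [HomologicalComplex.comp_f]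
    exact LinearMap.range_eq_top.mpr ((hvsurj i).comp hfsurj)
  have hle := range_le_of_homotopy hX hY' hfg i
  rw [hfv] at hle
  have hcomp : LinearMap.range ((u ≫ g).f i).hom ≤ LinearMap.range (g.f i).hom := by
    simp only [HomologicalComplex.comp_f, ModuleCat.hom_comp]
    exact LinearMap.range_comp_le_range _ _
  have htop : (⊤ : Submodule Λᵐᵒᵖ (Y'.X i)) ≤ LinearMap.range (g.f i).hom ⊔ J • ⊤ :=
    hle.trans (sup_le_sup_right hcomp _)
  have hgsurj : Function.Surjective (g.f i) := LinearMap.range_eq_top.mp (nakayama_top htop)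
  -- a surjection onto a projective module splits
  haveI : Module.Projective Λᵐᵒᵖ (Y'.X i) := hY'.2.1 i
  obtain ⟨s, hs⟩ := Module.projective_lifting_property (g.f i).hom LinearMap.id hgsurj
  exact ⟨⟨⟨ModuleCat.ofHom s, by ext y; exact LinearMap.congr_fun hs y⟩⟩⟩

end ARShapes
end

section
/- Let f : X → Y and g : X' → Y' be chain maps in C_I(P) between minimal projective complexes such that f and g are isomorphic in the homotopy category K_I(P), i.e., there exist isomorphisms φ : X → X' and ψ : Y → Y' in K_I(P) with ψ∘[f] = [g]∘φ. Assume that f and g are irreducible in C_I(P). If f is sirreducible, then g is sirreducible. -/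
/-! Statement 9: Lemma 2 of the paper. -/

open CategoryTheory CategoryTheory.Limits

namespace ARShapes

variable {Λ : Type} [Ring Λ]

/-! ### Auxiliary lemmas -/

section NakayamaAux

variable {R : Type*} [Ring R]

/-- Noncommutative Nakayama lemma: in a Noetherian module the radical multiple of the
whole module is superfluous. -/
theorem naka {M : Type*} [AddCommGroup M] [Module R M] [IsNoetherian R M] {N : Submodule R M}
    (h : N ⊔ (Ideal.jacobson (⊥ : Ideal R)) • (⊤ : Submodule R M) = ⊤) : N = ⊤ := by
  by_contra hN
  obtain ⟨N', ⟨hNN', hN'⟩, hmax⟩ :=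
    (set_has_maximal_iff_noetherian.mpr ‹IsNoetherian R M›)
      {P : Submodule R M | N ≤ P ∧ P ≠ ⊤} ⟨N, le_refl _, hN⟩
  have hJ : (Ideal.jacobson (⊥ : Ideal R)) • (⊤ : Submodule R M) ≤ N' := by
    rw [Submodule.smul_le]
    intro r hr x _
    by_cases hx : x ∈ N'
    · exact N'.smul_mem r hx
    set m : Ideal R := N'.comap (LinearMap.toSpanSingleton R M x) with hm
    have hmem : ∀ c : R, c ∈ m ↔ c • x ∈ N' := fun c => Iff.rfl
    have hmmax : m.IsMaximal := by
      constructor; constructor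
      · intro htop
        have : (1 : R) ∈ m := htop ▸ Submodule.mem_top
        rw [hmem, one_smul] at this
        exact hx this
      · intro I hI
        obtain ⟨s, hsI, hsm⟩ := SetLike.exists_of_lt hI
        have hbig : N' ⊔ Submodule.span R {s • x} = ⊤ := by
          by_contra htop
          have hlt : N' < N' ⊔ Submodule.span R {s • x} := by
            refine lt_of_le_of_ne le_sup_left (fun he => ?_)
            have : s • x ∈ N' := by
              rw [he]
              exact Submodule.mem_sup_right (Submodule.mem_span_singleton_self _)
            exact hsm ((hmem s).2 this)
          exact hmax _ ⟨le_trans hNN' le_sup_left, htop⟩ hlt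
        have hx' : x ∈ N' ⊔ Submodule.span R {s • x} := hbig ▸ Submodule.mem_top
        obtain ⟨n, hn, y, hy, hxy⟩ := Submodule.mem_sup.1 hx'
        obtain ⟨c, rfl⟩ := Submodule.mem_span_singleton.1 hy
        have h1 : (1 - c * s) • x ∈ N' := by
          have : (1 - c * s) • x = n := by
            rw [sub_smul, one_smul, mul_smul]
            exact (eq_sub_of_add_eq hxy).symm
          rw [this]; exact hn
        rw [eq_top_iff]
        intro t _
        have ht : t = t * (1 - c * s) + t * (c * s) := by
          rw [← mul_add, sub_add_cancel, mul_one]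
        rw [ht]
        exact I.add_mem (hI.le ((hmem _).2 (by
          rw [mul_smul]; exact N'.smul_mem t h1))) (I.smul_mem t (I.smul_mem c hsI))
    have : Ideal.jacobson (⊥ : Ideal R) ≤ m := sInf_le ⟨bot_le, hmmax⟩
    exact (hmem r).1 (this hr)
  exact hN' (top_le_iff.1 (h ▸ sup_le hNN' hJ : (⊤ : Submodule R M) ≤ N'))

theorem range_map_rad {M N : Type*} [AddCommGroup M] [Module R M]
    [AddCommGroup N] [Module R N] (φ : M →ₗ[R] N) :
    Submodule.map φ ((Ideal.jacobson (⊥ : Ideal R)) • (⊤ : Submodule R M)) ≤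
      (Ideal.jacobson (⊥ : Ideal R)) • (⊤ : Submodule R N) := by
  rw [Submodule.map_smul'']
  exact Submodule.smul_le.2 fun r hr n hn => Submodule.smul_mem_smul hr Submodule.mem_top

theorem bij_of_rad {M : Type*} [AddCommGroup M] [Module R M] [IsNoetherian R M]
    (φ : M →ₗ[R] M)
    (h : LinearMap.range (φ - LinearMap.id) ≤
      (Ideal.jacobson (⊥ : Ideal R)) • (⊤ : Submodule R M)) :
    Function.Bijective φ := by
  have hsurj : Function.Surjective φ := by
    have hsup : LinearMap.range φ ⊔
        (Ideal.jacobson (⊥ : Ideal R)) • (⊤ : Submodule R M) = ⊤ := by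
      rw [eq_top_iff]
      intro x _
      have hx : x = φ x - (φ - (LinearMap.id : M →ₗ[R] M)) x := by
        rw [LinearMap.sub_apply, LinearMap.id_apply]; abel
      rw [hx]
      exact Submodule.sub_mem _ (Submodule.mem_sup_left (LinearMap.mem_range_self _ _))
        (Submodule.mem_sup_right (h (LinearMap.mem_range_self _ _)))
    rw [← LinearMap.range_eq_top]
    exact naka hsup
  exact ⟨IsNoetherian.injective_of_surjective_endomorphism φ hsurj, hsurj⟩

end NakayamaAux

section CatAux

variable {C : Type*} [Category C]

theorem splitMono_comp_left {A B D : C} (u : A ⟶ B) [IsIso u] (p : B ⟶ D)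
    (h : IsSplitMono p) : IsSplitMono (u ≫ p) :=
  IsSplitMono.mk' ⟨retraction p ≫ inv u, by simp⟩

theorem splitMono_comp_right {A B D : C} (p : A ⟶ B) (h : IsSplitMono p) (v : B ⟶ D) [IsIso v] :
    IsSplitMono (p ≫ v) :=
  IsSplitMono.mk' ⟨inv v ≫ retraction p, by simp⟩

theorem splitEpi_comp_left {A B D : C} (u : A ⟶ B) [IsIso u] (p : B ⟶ D)
    (h : IsSplitEpi p) : IsSplitEpi (u ≫ p) :=
  IsSplitEpi.mk' ⟨section_ p ≫ inv u, by simp⟩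

theorem splitEpi_comp_right {A B D : C} (p : A ⟶ B) (h : IsSplitEpi p) (v : B ⟶ D) [IsIso v] :
    IsSplitEpi (p ≫ v) :=
  IsSplitEpi.mk' ⟨inv v ≫ section_ p, by simp⟩

end CatAux

section PerturbAux

variable {R : Type} [Ring R]

theorem rad_comp_left {M N P : ModuleCat R} (s : M ⟶ N) (ρ : N ⟶ P)
    (h : LinearMap.range s.hom ≤
      (Ideal.jacobson (⊥ : Ideal R)) • (⊤ : Submodule R N)) :
    LinearMap.range (s ≫ ρ : M ⟶ P).hom ≤
      (Ideal.jacobson (⊥ : Ideal R)) • (⊤ : Submodule R P) := by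
  show LinearMap.range (ρ.hom.comp s.hom) ≤ _
  rw [LinearMap.range_comp]
  exact le_trans (Submodule.map_mono h) (range_map_rad _)

theorem rad_comp_right {M N P : ModuleCat R} (s : M ⟶ N) (ρ : N ⟶ P)
    (h : LinearMap.range ρ.hom ≤
      (Ideal.jacobson (⊥ : Ideal R)) • (⊤ : Submodule R P)) :
    LinearMap.range (s ≫ ρ : M ⟶ P).hom ≤
      (Ideal.jacobson (⊥ : Ideal R)) • (⊤ : Submodule R P) :=
  le_trans (LinearMap.range_comp_le_range _ _) h

theorem rad_neg {M N : ModuleCat R} (s : M ⟶ N)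
    (h : LinearMap.range s.hom ≤
      (Ideal.jacobson (⊥ : Ideal R)) • (⊤ : Submodule R N)) :
    LinearMap.range (-s : M ⟶ N).hom ≤
      (Ideal.jacobson (⊥ : Ideal R)) • (⊤ : Submodule R N) := by
  show LinearMap.range (-s.hom) ≤ _
  rw [LinearMap.range_neg]
  exact h

theorem rad_eqToHom_comp {M N P : ModuleCat R} (e : M = N) (φ : N ⟶ P)
    (h : LinearMap.range φ.hom ≤
      (Ideal.jacobson (⊥ : Ideal R)) • (⊤ : Submodule R P)) :
    LinearMap.range (eqToHom e ≫ φ : M ⟶ P).hom ≤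
      (Ideal.jacobson (⊥ : Ideal R)) • (⊤ : Submodule R P) := by
  subst e; rwa [eqToHom_refl, Category.id_comp]

theorem rad_comp_eqToHom {M N P : ModuleCat R} (φ : M ⟶ N) (e : N = P)
    (h : LinearMap.range φ.hom ≤
      (Ideal.jacobson (⊥ : Ideal R)) • (⊤ : Submodule R N)) :
    LinearMap.range (φ ≫ eqToHom e : M ⟶ P).hom ≤
      (Ideal.jacobson (⊥ : Ideal R)) • (⊤ : Submodule R P) := by
  subst e; rwa [eqToHom_refl, Category.comp_id]

theorem perturb_splitMono {M N : ModuleCat R} (hM : IsNoetherian R M) (p q : M ⟶ N)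
    (hp : IsSplitMono p)
    (h : LinearMap.range (q - p : M ⟶ N).hom ≤
      (Ideal.jacobson (⊥ : Ideal R)) • (⊤ : Submodule R N)) :
    IsSplitMono q := by
  let ρ : N ⟶ M := retraction p
  have hc : LinearMap.range ((q ≫ ρ) - 𝟙 M : M ⟶ M).hom ≤
      (Ideal.jacobson (⊥ : Ideal R)) • (⊤ : Submodule R M) := by
    have he : ((q ≫ ρ) - 𝟙 M : M ⟶ M) = ((q - p : M ⟶ N) ≫ ρ : M ⟶ M) := by
      have hpρ : p ≫ ρ = 𝟙 M := IsSplitMono.id p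
      rw [Preadditive.sub_comp, hpρ]
    rw [he]
    exact rad_comp_left _ _ h
  have hbij : Function.Bijective (q ≫ ρ : M ⟶ M).hom := bij_of_rad _ hc
  have : IsIso (q ≫ ρ) := (ConcreteCategory.isIso_iff_bijective _).2 hbij
  exact IsSplitMono.mk' ⟨ρ ≫ inv (q ≫ ρ), by rw [← Category.assoc, IsIso.hom_inv_id]⟩

theorem perturb_splitEpi {M N : ModuleCat R} (hN : IsNoetherian R N) (p q : M ⟶ N)
    (hp : IsSplitEpi p)
    (h : LinearMap.range (q - p : M ⟶ N).hom ≤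
      (Ideal.jacobson (⊥ : Ideal R)) • (⊤ : Submodule R N)) :
    IsSplitEpi q := by
  let σ : N ⟶ M := section_ p
  have hc : LinearMap.range ((σ ≫ q) - 𝟙 N : N ⟶ N).hom ≤
      (Ideal.jacobson (⊥ : Ideal R)) • (⊤ : Submodule R N) := by
    have he : ((σ ≫ q) - 𝟙 N : N ⟶ N) = (σ ≫ (q - p : M ⟶ N) : N ⟶ N) := by
      have hσp : σ ≫ p = 𝟙 N := IsSplitEpi.id p
      rw [Preadditive.comp_sub, hσp]
    rw [he]
    exact rad_comp_right _ _ h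
  have hbij : Function.Bijective (σ ≫ q : N ⟶ N).hom := bij_of_rad _ hc
  have : IsIso (σ ≫ q) := (ConcreteCategory.isIso_iff_bijective _).2 hbij
  exact IsSplitEpi.mk' ⟨inv (σ ≫ q) ≫ σ, by rw [Category.assoc, IsIso.inv_hom_id]⟩

end PerturbAux

theorem homotopy_range {X Y : Cplx Λ}
    (hdX : ∀ i : ℤ, LinearMap.range (X.d i (i + 1)).hom ≤
      (Ideal.jacobson (⊥ : Ideal Λᵐᵒᵖ)) • (⊤ : Submodule Λᵐᵒᵖ (X.X (i + 1))))
    (hdY : ∀ i : ℤ, LinearMap.range (Y.d i (i + 1)).hom ≤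
      (Ideal.jacobson (⊥ : Ideal Λᵐᵒᵖ)) • (⊤ : Submodule Λᵐᵒᵖ (Y.X (i + 1))))
    {p q : X ⟶ Y} (H : Homotopy p q) (i : ℤ) :
    LinearMap.range (p.f i - q.f i : X.X i ⟶ Y.X i).hom ≤
      (Ideal.jacobson (⊥ : Ideal Λᵐᵒᵖ)) • (⊤ : Submodule Λᵐᵒᵖ (Y.X i)) := by
  obtain ⟨j, rfl⟩ : ∃ j : ℤ, i = j + 1 := ⟨i - 1, by omega⟩
  have h1 : dNext (j+1) H.hom = X.d (j+1) (j+1+1) ≫ H.hom (j+1+1) (j+1) :=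
    dNext_eq _ (by simp)
  have h2 : prevD (j+1) H.hom = H.hom (j+1) j ≫ Y.d j (j+1) :=
    prevD_eq _ (by simp)
  have hc : p.f (j+1) - q.f (j+1) =
      (X.d (j+1) (j+1+1) ≫ H.hom (j+1+1) (j+1)) + (H.hom (j+1) j ≫ Y.d j (j+1)) := by
    rw [← h1, ← h2, H.comm (j+1)]
    abel
  rw [hc]
  intro x hx
  obtain ⟨y, rfl⟩ := hx
  have e : ((X.d (j+1) (j+1+1) ≫ H.hom (j+1+1) (j+1)) + (H.hom (j+1) j ≫ Y.d j (j+1))).hom y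
      = (H.hom (j+1+1) (j+1)).hom ((X.d (j+1) (j+1+1)).hom y) + (Y.d j (j+1)).hom ((H.hom (j+1) j).hom y) := rfl
  rw [e]
  refine Submodule.add_mem _ ?_ ?_
  · exact range_map_rad (H.hom (j+1+1) (j+1)).hom
      (Submodule.mem_map_of_mem (hdX (j+1) (LinearMap.mem_range_self _ _)))
  · exact hdY j (LinearMap.mem_range_self _ _)

/-! ### The auxiliary complex interpolating between `X'` and `Y'` -/

section W
variable (X' Y' : Cplx Λ) (i₀ : ℤ) (Z : ModuleCat Λᵐᵒᵖ) (a : X'.X i₀ ⟶ Z) (b : Z ⟶ Y'.X i₀)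

def WXf : ℤ → ModuleCat Λᵐᵒᵖ := fun i => if i < i₀ then X'.X i else if i = i₀ then Z else Y'.X i

theorem WXf_lt {i : ℤ} (h : i < i₀) : WXf X' Y' i₀ Z i = X'.X i := by
  simp only [WXf]; rw [if_pos h]
theorem WXf_eq : WXf X' Y' i₀ Z i₀ = Z := by simp [WXf]
theorem WXf_gt {i : ℤ} (h : i₀ < i) : WXf X' Y' i₀ Z i = Y'.X i := by
  simp only [WXf]
  rw [if_neg (by omega : ¬ i < i₀), if_neg (by omega : ¬ i = i₀)]

def dWf (i : ℤ) : WXf X' Y' i₀ Z i ⟶ WXf X' Y' i₀ Z (i + 1) :=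
  if h1 : i + 1 < i₀ then
    eqToHom (WXf_lt X' Y' i₀ Z (by omega)) ≫ X'.d i (i+1) ≫ eqToHom (WXf_lt X' Y' i₀ Z h1).symm
  else if h2 : i + 1 = i₀ then
    eqToHom (WXf_lt X' Y' i₀ Z (by omega)) ≫ X'.d i (i+1) ≫ eqToHom (congrArg X'.X h2) ≫ a ≫
      eqToHom (show Z = WXf X' Y' i₀ Z (i+1) by rw [h2]; exact (WXf_eq X' Y' i₀ Z).symm)
  else if h3 : i = i₀ then
    eqToHom (show WXf X' Y' i₀ Z i = Z by rw [h3]; exact WXf_eq X' Y' i₀ Z) ≫ b ≫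
      eqToHom (show Y'.X i₀ = Y'.X i by rw [h3]) ≫ Y'.d i (i+1) ≫
      eqToHom (WXf_gt X' Y' i₀ Z (by omega : i₀ < i + 1)).symm
  else
    eqToHom (WXf_gt X' Y' i₀ Z (by omega)) ≫ Y'.d i (i+1) ≫
      eqToHom (WXf_gt X' Y' i₀ Z (by omega : i₀ < i + 1)).symm

theorem sqW (g : X' ⟶ Y') (hab : g.f i₀ = a ≫ b) (i : ℤ) :
    dWf X' Y' i₀ Z a b i ≫ dWf X' Y' i₀ Z a b (i + 1) = 0 := by
  by_cases h1 : i + 1 + 1 < i₀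
  · rw [dWf, dif_pos (by omega : i + 1 < i₀), dWf, dif_pos h1]
    simp
  by_cases h2 : i + 1 + 1 = i₀
  · rw [dWf, dif_pos (by omega : i + 1 < i₀), dWf, dif_neg (by omega), dif_pos h2]
    simp
  by_cases h3 : i + 1 = i₀
  · subst h3
    rw [dWf, dif_neg (by omega), dif_pos rfl, dWf, dif_neg (by omega), dif_neg (by omega),
      dif_pos rfl]
    simp only [eqToHom_refl, Category.id_comp, Category.comp_id, Category.assoc, eqToHom_trans,
      eqToHom_trans_assoc]
    slice_lhs 3 4 => rw [← hab]
    simp [g.comm]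
  by_cases h4 : i = i₀
  · subst h4
    rw [dWf, dif_neg (by omega), dif_neg (by omega), dif_pos rfl, dWf, dif_neg (by omega),
      dif_neg (by omega), dif_neg (by omega)]
    simp
  · rw [dWf, dif_neg (by omega), dif_neg (by omega), dif_neg h4, dWf, dif_neg (by omega),
      dif_neg (by omega), dif_neg (by omega)]
    simp

abbrev Wcplx (g : X' ⟶ Y') (hab : g.f i₀ = a ≫ b) : Cplx Λ :=
  CochainComplex.of (WXf X' Y' i₀ Z) (dWf X' Y' i₀ Z a b) (sqW X' Y' i₀ Z a b g hab)

variable (g : X' ⟶ Y') (hab : g.f i₀ = a ≫ b)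

theorem Wcplx_d (i : ℤ) :
    (Wcplx X' Y' i₀ Z a b g hab).d i (i + 1) = dWf X' Y' i₀ Z a b i :=
  CochainComplex.of_d _ _ i

def alphaF (i : ℤ) : X'.X i ⟶ WXf X' Y' i₀ Z i :=
  if h : i < i₀ then eqToHom (WXf_lt X' Y' i₀ Z h).symm
  else if h2 : i = i₀ then
    eqToHom (congrArg X'.X h2) ≫ a ≫
      eqToHom (show Z = WXf X' Y' i₀ Z i by rw [h2]; exact (WXf_eq X' Y' i₀ Z).symm)
  else g.f i ≫ eqToHom (WXf_gt X' Y' i₀ Z (by omega)).symm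

def betaF (i : ℤ) : WXf X' Y' i₀ Z i ⟶ Y'.X i :=
  if h : i < i₀ then eqToHom (WXf_lt X' Y' i₀ Z h) ≫ g.f i
  else if h2 : i = i₀ then
    eqToHom (show WXf X' Y' i₀ Z i = Z by rw [h2]; exact WXf_eq X' Y' i₀ Z) ≫ b ≫
      eqToHom (show Y'.X i₀ = Y'.X i by rw [h2])
  else eqToHom (WXf_gt X' Y' i₀ Z (by omega))

def alphaHom : X' ⟶ Wcplx X' Y' i₀ Z a b g hab where
  f i := alphaF X' Y' i₀ Z a g i
  comm' := by
    rintro i j (rfl : i + 1 = j)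
    show alphaF X' Y' i₀ Z a g i ≫ (Wcplx X' Y' i₀ Z a b g hab).d i (i+1)
      = X'.d i (i+1) ≫ alphaF X' Y' i₀ Z a g (i+1)
    rw [Wcplx_d]
    by_cases h1 : i + 1 < i₀
    · rw [alphaF, dif_pos (by omega : i < i₀), alphaF, dif_pos h1, dWf, dif_pos h1]
      simp
    by_cases h2 : i + 1 = i₀
    · subst h2
      rw [alphaF, dif_pos (by omega), alphaF, dif_neg (by omega), dif_pos rfl,
        dWf, dif_neg (by omega), dif_pos rfl]
      simp
    by_cases h3 : i = i₀
    · subst h3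
      rw [alphaF, dif_neg (by omega), dif_pos rfl, alphaF, dif_neg (by omega), dif_neg (by omega),
        dWf, dif_neg (by omega), dif_neg (by omega), dif_pos rfl]
      simp only [eqToHom_refl, Category.id_comp, Category.comp_id, Category.assoc,
        eqToHom_trans_assoc, eqToHom_trans]
      slice_lhs 1 2 => rw [← hab]
      simp [g.comm]
    · rw [alphaF, dif_neg (by omega), dif_neg h3, alphaF, dif_neg (by omega), dif_neg (by omega),
        dWf, dif_neg (by omega), dif_neg (by omega), dif_neg h3]
      simp [g.comm]

def betaHom : Wcplx X' Y' i₀ Z a b g hab ⟶ Y' where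
  f i := betaF X' Y' i₀ Z b g i
  comm' := by
    rintro i j (rfl : i + 1 = j)
    show betaF X' Y' i₀ Z b g i ≫ Y'.d i (i+1)
      = (Wcplx X' Y' i₀ Z a b g hab).d i (i+1) ≫ betaF X' Y' i₀ Z b g (i+1)
    rw [Wcplx_d]
    by_cases h1 : i + 1 < i₀
    · rw [betaF, dif_pos (by omega : i < i₀), betaF, dif_pos h1, dWf, dif_pos h1]
      simp [g.comm]
    by_cases h2 : i + 1 = i₀
    · subst h2
      rw [betaF, dif_pos (by omega), betaF, dif_neg (by omega), dif_pos rfl,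
        dWf, dif_neg (by omega), dif_pos rfl]
      simp only [eqToHom_refl, Category.id_comp, Category.comp_id, Category.assoc,
        eqToHom_trans_assoc, eqToHom_trans]
      rw [← hab, g.comm]
    by_cases h3 : i = i₀
    · subst h3
      rw [betaF, dif_neg (by omega), dif_pos rfl, betaF, dif_neg (by omega), dif_neg (by omega),
        dWf, dif_neg (by omega), dif_neg (by omega), dif_pos rfl]
      simp
    · rw [betaF, dif_neg (by omega), dif_neg h3, betaF, dif_neg (by omega), dif_neg (by omega),
        dWf, dif_neg (by omega), dif_neg (by omega), dif_neg h3]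
      simp

theorem alpha_beta : alphaHom X' Y' i₀ Z a b g hab ≫ betaHom X' Y' i₀ Z a b g hab = g := by
  apply HomologicalComplex.Hom.ext
  funext i

  show alphaF X' Y' i₀ Z a g i ≫ betaF X' Y' i₀ Z b g i = g.f i
  by_cases h : i < i₀
  · rw [alphaF, dif_pos h, betaF, dif_pos h]; simp
  by_cases h2 : i = i₀
  · subst h2
    rw [alphaF, dif_neg (by omega), dif_pos rfl, betaF, dif_neg (by omega), dif_pos rfl]
    simp [hab]
  · rw [alphaF, dif_neg h, dif_neg h2, betaF, dif_neg h, dif_neg h2]; simp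

theorem W_minimal (hX' : IsMinimalProjective X') (hY' : IsMinimalProjective Y')
    (hZf : Module.Finite Λᵐᵒᵖ Z) (hZp : Module.Projective Λᵐᵒᵖ Z) :
    IsMinimalProjective (Wcplx X' Y' i₀ Z a b g hab) := by
  refine ⟨fun i => ?_, fun i => ?_, fun i => ?_⟩
  · show Module.Finite Λᵐᵒᵖ (WXf X' Y' i₀ Z i)
    rcases lt_trichotomy i i₀ with h | h | h
    · rw [WXf_lt X' Y' i₀ Z h]; exact hX'.1 i
    · rw [h, WXf_eq X' Y' i₀ Z]; exact hZf
    · rw [WXf_gt X' Y' i₀ Z h]; exact hY'.1 i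
  · show Module.Projective Λᵐᵒᵖ (WXf X' Y' i₀ Z i)
    rcases lt_trichotomy i i₀ with h | h | h
    · rw [WXf_lt X' Y' i₀ Z h]; exact hX'.2.1 i
    · rw [h, WXf_eq X' Y' i₀ Z]; exact hZp
    · rw [WXf_gt X' Y' i₀ Z h]; exact hY'.2.1 i
  · rw [Wcplx_d]
    by_cases h1 : i + 1 < i₀
    · rw [dWf, dif_pos h1]
      exact rad_eqToHom_comp _ _ (rad_comp_eqToHom _ _ (hX'.2.2 i))
    by_cases h2 : i + 1 = i₀
    · subst h2
      rw [dWf, dif_neg (by omega), dif_pos rfl]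
      refine rad_eqToHom_comp _ _ ?_
      rw [show (X'.d i (i+1) ≫ eqToHom (congrArg X'.X rfl) ≫ a ≫
          eqToHom ((WXf_eq X' Y' (i+1) Z).symm)) =
          ((X'.d i (i+1) ≫ eqToHom (congrArg X'.X rfl) ≫ a) ≫
          eqToHom ((WXf_eq X' Y' (i+1) Z).symm)) by simp]
      refine rad_comp_eqToHom _ _ ?_
      rw [show (X'.d i (i+1) ≫ eqToHom (congrArg X'.X rfl) ≫ a)
          = (X'.d i (i+1) ≫ (eqToHom (congrArg X'.X rfl) ≫ a)) by simp]
      exact rad_comp_left _ _ (hX'.2.2 i)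
    by_cases h3 : i = i₀
    · subst h3
      rw [dWf, dif_neg (by omega), dif_neg (by omega), dif_pos rfl]
      refine rad_eqToHom_comp _ _ ?_
      refine rad_comp_right _ _ ?_
      refine rad_eqToHom_comp _ _ ?_
      exact rad_comp_eqToHom _ _ (hY'.2.2 i)
    · rw [dWf, dif_neg h1, dif_neg h2, dif_neg h3]
      exact rad_eqToHom_comp _ _ (rad_comp_eqToHom _ _ (hY'.2.2 i))

include g hab in
theorem W_factor (hgirr : IrreducibleC g) (hZf : Module.Finite Λᵐᵒᵖ Z)
    (hZp : Module.Projective Λᵐᵒᵖ Z)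
    (hX' : IsMinimalProjective X') (hY' : IsMinimalProjective Y') :
    IsSplitMono a ∨ IsSplitEpi b := by
  have halpha : alphaF X' Y' i₀ Z a g i₀ = a ≫
      eqToHom (show Z = WXf X' Y' i₀ Z i₀ from (WXf_eq X' Y' i₀ Z).symm) := by
    rw [alphaF, dif_neg (by omega), dif_pos rfl]
    simp
  have hbeta : betaF X' Y' i₀ Z b g i₀ =
      eqToHom (WXf_eq X' Y' i₀ Z) ≫ b := by
    rw [betaF, dif_neg (by omega), dif_pos rfl]
    simp
  rcases hgirr.2.2 (Wcplx X' Y' i₀ Z a b g hab)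
      (W_minimal X' Y' i₀ Z a b g hab hX' hY' hZf hZp)
      (alphaHom X' Y' i₀ Z a b g hab) (betaHom X' Y' i₀ Z a b g hab)
      (alpha_beta X' Y' i₀ Z a b g hab).symm with h | h
  · left
    have hr := IsSplitMono.id (alphaHom X' Y' i₀ Z a b g hab)
    have hcomp : alphaF X' Y' i₀ Z a g i₀ ≫
        (retraction (alphaHom X' Y' i₀ Z a b g hab)).f i₀ = 𝟙 (X'.X i₀) :=
      congrArg (fun q => HomologicalComplex.Hom.f q i₀) hr
    rw [halpha, Category.assoc] at hcomp
    exact IsSplitMono.mk' ⟨_, hcomp⟩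
  · right
    have hr := IsSplitEpi.id (betaHom X' Y' i₀ Z a b g hab)
    have hcomp : (section_ (betaHom X' Y' i₀ Z a b g hab)).f i₀ ≫
        betaF X' Y' i₀ Z b g i₀ = 𝟙 (Y'.X i₀) :=
      congrArg (fun q => HomologicalComplex.Hom.f q i₀) hr
    rw [hbeta, ← Category.assoc] at hcomp
    exact IsSplitEpi.mk' ⟨_, hcomp⟩


end W

/-- If irreducible chain maps `f` and `g` between minimal projective complexes are isomorphic in the homotopy category `K_I(P)` and `f` is sirreducible, then `g` is sirreducible. -/
theorem sirreducible_of_iso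
    {k Λ : Type} [Field k] [Ring Λ] [Algebra k Λ] [FiniteDimensional k Λ]
    (X Y X' Y' : Cplx Λ)
    (hX : IsMinimalProjective X) (hY : IsMinimalProjective Y)
    (hX' : IsMinimalProjective X') (hY' : IsMinimalProjective Y')
    (f : X ⟶ Y) (g : X' ⟶ Y')
    (φ : (Q Λ).obj X ≅ (Q Λ).obj X') (ψ : (Q Λ).obj Y ≅ (Q Λ).obj Y')
    (hcomm : (Q Λ).map f ≫ ψ.hom = φ.hom ≫ (Q Λ).map g)
    (hfirr : IrreducibleC f) (hgirr : IrreducibleC g)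
    (hf : Sirreducible f) :
    Sirreducible g := by
  classical
  haveI : Module.Finite k Λᵐᵒᵖ := Module.Finite.equiv (MulOpposite.opLinearEquiv k)
  haveI hNR : IsNoetherianRing Λᵐᵒᵖ :=
    isNoetherian_of_tower k (isNoetherian_of_isNoetherianRing_of_finite k Λᵐᵒᵖ)
  have hNoeth : ∀ (M : ModuleCat Λᵐᵒᵖ), Module.Finite Λᵐᵒᵖ M → IsNoetherian Λᵐᵒᵖ M := by
    intro M hM
    haveI := hM
    exact isNoetherian_of_isNoetherianRing_of_finite Λᵐᵒᵖ M
  obtain ⟨w, hw⟩ := (Q Λ).map_surjective φ.hom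
  obtain ⟨w', hw'⟩ := (Q Λ).map_surjective φ.inv
  obtain ⟨z, hz⟩ := (Q Λ).map_surjective ψ.hom
  obtain ⟨z', hz'⟩ := (Q Λ).map_surjective ψ.inv
  have H1 : Homotopy (w ≫ w') (𝟙 X) := HomotopyCategory.homotopyOfEq _ _
    (by rw [Functor.map_comp, hw, hw', Iso.hom_inv_id, CategoryTheory.Functor.map_id])
  have H2 : Homotopy (w' ≫ w) (𝟙 X') := HomotopyCategory.homotopyOfEq _ _
    (by rw [Functor.map_comp, hw, hw', Iso.inv_hom_id, CategoryTheory.Functor.map_id])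
  have H3 : Homotopy (z ≫ z') (𝟙 Y) := HomotopyCategory.homotopyOfEq _ _
    (by rw [Functor.map_comp, hz, hz', Iso.hom_inv_id, CategoryTheory.Functor.map_id])
  have H4 : Homotopy (z' ≫ z) (𝟙 Y') := HomotopyCategory.homotopyOfEq _ _
    (by rw [Functor.map_comp, hz, hz', Iso.inv_hom_id, CategoryTheory.Functor.map_id])
  have H5 : Homotopy (f ≫ z) (w ≫ g) := HomotopyCategory.homotopyOfEq _ _
    (by rw [Functor.map_comp, Functor.map_comp, hw, hz, hcomm])
  have hwb : ∀ i : ℤ, Function.Bijective (w.f i) := by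
    intro i
    haveI := hNoeth _ (hX.1 i)
    haveI := hNoeth _ (hX'.1 i)
    have b1 : Function.Bijective ((w ≫ w').f i) := by
      have hr := homotopy_range hX.2.2 hX.2.2 H1 i
      rw [HomologicalComplex.id_f] at hr
      exact bij_of_rad _ hr
    have b2 : Function.Bijective ((w' ≫ w).f i) := by
      have hr := homotopy_range hX'.2.2 hX'.2.2 H2 i
      rw [HomologicalComplex.id_f] at hr
      exact bij_of_rad _ hr
    constructor
    · have h1 : Function.Injective ((w'.f i) ∘ (w.f i)) := b1.1
      exact Function.Injective.of_comp h1
    · have h2 : Function.Surjective ((w.f i) ∘ (w'.f i)) := b2.2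
      exact Function.Surjective.of_comp h2
  have hzb : ∀ i : ℤ, Function.Bijective (z.f i) := by
    intro i
    haveI := hNoeth _ (hY.1 i)
    haveI := hNoeth _ (hY'.1 i)
    have b1 : Function.Bijective ((z ≫ z').f i) := by
      have hr := homotopy_range hY.2.2 hY.2.2 H3 i
      rw [HomologicalComplex.id_f] at hr
      exact bij_of_rad _ hr
    have b2 : Function.Bijective ((z' ≫ z).f i) := by
      have hr := homotopy_range hY'.2.2 hY'.2.2 H4 i
      rw [HomologicalComplex.id_f] at hr
      exact bij_of_rad _ hr
    constructor
    · have h1 : Function.Injective ((z'.f i) ∘ (z.f i)) := b1.1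
      exact Function.Injective.of_comp h1
    · have h2 : Function.Surjective ((z.f i) ∘ (z'.f i)) := b2.2
      exact Function.Surjective.of_comp h2
  have hwiso : ∀ i : ℤ, IsIso (w.f i) := fun i =>
    (ConcreteCategory.isIso_iff_bijective _).2 (hwb i)
  have hziso : ∀ i : ℤ, IsIso (z.f i) := fun i =>
    (ConcreteCategory.isIso_iff_bijective _).2 (hzb i)
  have ht : ∀ i : ℤ, LinearMap.range
      ((f ≫ z).f i - (w ≫ g).f i : X.X i ⟶ Y'.X i).hom ≤
      (Ideal.jacobson (⊥ : Ideal Λᵐᵒᵖ)) • (⊤ : Submodule Λᵐᵒᵖ (Y'.X i)) :=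
    fun i => homotopy_range hX.2.2 hY'.2.2 H5 i
  have epi_fwd : ∀ i : ℤ, IsSplitEpi (f.f i) → IsSplitEpi (g.f i) := by
    intro i hsf
    haveI := hwiso i
    haveI := hziso i
    have hp : IsSplitEpi (inv (w.f i) ≫ f.f i ≫ z.f i) :=
      splitEpi_comp_left _ _ (splitEpi_comp_right _ hsf _)
    refine perturb_splitEpi (hNoeth _ (hY'.1 i)) _ (g.f i) hp ?_
    have he : (g.f i - (inv (w.f i) ≫ f.f i ≫ z.f i) : X'.X i ⟶ Y'.X i)
        = inv (w.f i) ≫ (-((f ≫ z).f i - (w ≫ g).f i)) := by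
      simp [Preadditive.comp_sub, HomologicalComplex.comp_f]
    rw [he]
    exact rad_comp_right _ _ (rad_neg _ (ht i))
  have mono_fwd : ∀ i : ℤ, IsSplitMono (f.f i) → IsSplitMono (g.f i) := by
    intro i hsf
    haveI := hwiso i
    haveI := hziso i
    have hp : IsSplitMono (inv (w.f i) ≫ f.f i ≫ z.f i) :=
      splitMono_comp_left _ _ (splitMono_comp_right _ hsf _)
    refine perturb_splitMono (hNoeth _ (hX'.1 i)) _ (g.f i) hp ?_
    have he : (g.f i - (inv (w.f i) ≫ f.f i ≫ z.f i) : X'.X i ⟶ Y'.X i)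
        = inv (w.f i) ≫ (-((f ≫ z).f i - (w ≫ g).f i)) := by
      simp [Preadditive.comp_sub, HomologicalComplex.comp_f]
    rw [he]
    exact rad_comp_right _ _ (rad_neg _ (ht i))
  have mono_rev : ∀ i : ℤ, IsSplitMono (g.f i) → IsSplitMono (f.f i) := by
    intro i hsg
    haveI := hwiso i
    haveI := hziso i
    have hp : IsSplitMono (w.f i ≫ g.f i ≫ inv (z.f i)) :=
      splitMono_comp_left _ _ (splitMono_comp_right _ hsg _)
    refine perturb_splitMono (hNoeth _ (hX.1 i)) _ (f.f i) hp ?_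
    have he : (f.f i - (w.f i ≫ g.f i ≫ inv (z.f i)) : X.X i ⟶ Y.X i)
        = ((f ≫ z).f i - (w ≫ g).f i) ≫ inv (z.f i) := by
      simp [Preadditive.sub_comp, HomologicalComplex.comp_f]
    rw [he]
    exact rad_comp_left _ _ (ht i)
  have epi_rev : ∀ i : ℤ, IsSplitEpi (g.f i) → IsSplitEpi (f.f i) := by
    intro i hsg
    haveI := hwiso i
    haveI := hziso i
    have hp : IsSplitEpi (w.f i ≫ g.f i ≫ inv (z.f i)) :=
      splitEpi_comp_left _ _ (splitEpi_comp_right _ hsg _)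
    refine perturb_splitEpi (hNoeth _ (hY.1 i)) _ (f.f i) hp ?_
    have he : (f.f i - (w.f i ≫ g.f i ≫ inv (z.f i)) : X.X i ⟶ Y.X i)
        = ((f ≫ z).f i - (w ≫ g).f i) ≫ inv (z.f i) := by
      simp [Preadditive.sub_comp, HomologicalComplex.comp_f]
    rw [he]
    exact rad_comp_left _ _ (ht i)
  obtain ⟨i₀, hfi, hflow, hfhigh⟩ := hf
  refine ⟨i₀, ⟨?_, ?_, ?_⟩, fun i hi => epi_fwd i (hflow i hi),
    fun i hi => mono_fwd i (hfhigh i hi)⟩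
  · intro hm
    exact hfi.1 (mono_rev i₀ hm)
  · intro he
    exact hfi.2.1 (epi_rev i₀ he)
  · intro Z hZf hZp A B hab
    exact W_factor X' Y' i₀ Z A B g hab hgirr hZf hZp hX' hY'


end ARShapes
end
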